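/- arXiv:1905.10143 — 8 statements merged into one kernel-verified Lean document; each statement's English description precedes it below -/
import Mathlib

section
/- Given an (ε₁,ε₂)-significant instance with clusters C*_1,…,C*_k and η, δ ∈ (0,1), if m is a positive integer with m ≥ (3k/(δ²ε₁))·log(2k/η) and s : {1,…,m} → P is an i.i.d. uniform sample from P, then with probability at least 1 − η, for every j ∈ {1,…,k} the count satisfies (1−δ)·(|C*_j|/n)·m ≤ |{i : s_i ∈ C*_j}| ≤ (1+δ)·(|C*_j|/n)·m. -/
open scoped Classical
open Finset

/-- f 0 = 0 and nonneg derivative on [0,b] implies 0 ≤ f b. -/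
lemma nonneg_of_deriv_nonneg_aux {f f' : ℝ → ℝ} {b : ℝ} (hb : 0 ≤ b)
    (hd : ∀ x ∈ Set.Icc (0:ℝ) b, HasDerivAt f (f' x) x)
    (h0 : f 0 = 0) (hp : ∀ x ∈ Set.Ioo (0:ℝ) b, 0 ≤ f' x) : 0 ≤ f b := by
  have hmono : MonotoneOn f (Set.Icc 0 b) := by
    apply monotoneOn_of_deriv_nonneg (convex_Icc 0 b)
    · exact fun x hx => (hd x hx).continuousAt.continuousWithinAt
    · intro x hx
      rw [interior_Icc] at hx
      exact ((hd x ⟨hx.1.le, hx.2.le⟩).differentiableAt).differentiableWithinAt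
    · intro x hx
      rw [interior_Icc] at hx
      rw [(hd x ⟨hx.1.le, hx.2.le⟩).deriv]
      exact hp x hx
  have := hmono ⟨le_refl 0, hb⟩ ⟨hb, le_refl b⟩ hb
  rw [h0] at this; exact this

/-- log(1+x) ≥ x - x²/2 for x ≥ 0. -/
lemma log_one_add_ge_quad {x : ℝ} (hx : 0 ≤ x) :
    x - x ^ 2 / 2 ≤ Real.log (1 + x) := by
  have key : 0 ≤ Real.log (1 + x) - x + x ^ 2 / 2 := by
    apply nonneg_of_deriv_nonneg_aux (f := fun y => Real.log (1 + y) - y + y ^ 2 / 2)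
      (f' := fun y => (1 + y)⁻¹ - 1 + y) hx
    · intro y hy
      have h1 : (0:ℝ) < 1 + y := by linarith [hy.1]
      have hlog : HasDerivAt (fun y : ℝ => Real.log (1 + y)) (1 / (1 + y)) y := by
        have : HasDerivAt (fun y : ℝ => 1 + y) 1 y := by
          simpa using (hasDerivAt_id y).const_add 1
        simpa using this.log h1.ne'
      have hsq : HasDerivAt (fun y : ℝ => y ^ 2 / 2) y y := by
        have := (hasDerivAt_pow 2 y).div_const 2
        simpa using this
      have := (hlog.fun_sub (hasDerivAt_id y)).fun_add hsq
      simpa [one_div] using this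
    · simp
    · intro y hy
      have h1 : (0:ℝ) < 1 + y := by linarith [hy.1]
      have : (1 + y)⁻¹ - 1 + y = y ^ 2 / (1 + y) := by
        field_simp; ring
      rw [this]
      positivity
  linarith

/-- (1+δ)log(1+δ) - δ ≥ δ²/3 for δ ∈ [0,1]. -/
lemma chernoff_upper_core {d : ℝ} (h0 : 0 ≤ d) (h1 : d ≤ 1) :
    d ^ 2 / 3 ≤ (1 + d) * Real.log (1 + d) - d := by
  have key : 0 ≤ (1 + d) * Real.log (1 + d) - d - d ^ 2 / 2 + d ^ 3 / 6 := by
    apply nonneg_of_deriv_nonneg_aux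
      (f := fun y => (1 + y) * Real.log (1 + y) - y - y ^ 2 / 2 + y ^ 3 / 6)
      (f' := fun y => Real.log (1 + y) - y + y ^ 2 / 2) h0
    · intro y hy
      have h1y : (0:ℝ) < 1 + y := by linarith [hy.1]
      have hlog : HasDerivAt (fun y : ℝ => Real.log (1 + y)) (1 / (1 + y)) y := by
        have : HasDerivAt (fun y : ℝ => 1 + y) 1 y := by
          simpa using (hasDerivAt_id y).const_add 1
        simpa using this.log h1y.ne'
      have hone : HasDerivAt (fun y : ℝ => 1 + y) 1 y := by
        simpa using (hasDerivAt_id y).const_add 1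
      have hmul : HasDerivAt (fun y : ℝ => (1 + y) * Real.log (1 + y))
          (1 * Real.log (1 + y) + (1 + y) * (1 / (1 + y))) y := hone.mul hlog
      have hsq : HasDerivAt (fun y : ℝ => y ^ 2 / 2) y y := by
        simpa using (hasDerivAt_pow 2 y).div_const 2
      have hcub : HasDerivAt (fun y : ℝ => y ^ 3 / 6) (y ^ 2 / 2) y := by
        have := (hasDerivAt_pow 3 y).div_const 6
        norm_num at this
        exact this.congr_deriv (by ring)
      have := ((hmul.fun_sub (hasDerivAt_id y)).fun_sub hsq).fun_add hcub
      have hne : (1 + y) * (1 / (1 + y)) = 1 := by field_simp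
      refine this.congr_deriv ?_
      rw [hne]; ring
    · simp
    · intro y hy
      have := log_one_add_ge_quad hy.1.le
      linarith
  have hq := log_one_add_ge_quad h0
  nlinarith [key]

/-- (1-δ)log(1-δ) + δ ≥ δ²/2 for δ ∈ [0,1). -/
lemma chernoff_lower_core {d : ℝ} (h0 : 0 ≤ d) (h1 : d < 1) :
    d ^ 2 / 2 ≤ (1 - d) * Real.log (1 - d) + d := by
  have key : 0 ≤ (1 - d) * Real.log (1 - d) + d - d ^ 2 / 2 := by
    apply nonneg_of_deriv_nonneg_aux
      (f := fun y => (1 - y) * Real.log (1 - y) + y - y ^ 2 / 2)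
      (f' := fun y => -Real.log (1 - y) - y) h0
    · intro y hy
      have h1y : (0:ℝ) < 1 - y := by linarith [hy.2, h1]
      have hone : HasDerivAt (fun y : ℝ => 1 - y) (-1) y := by
        simpa using (hasDerivAt_id y).const_sub 1
      have hlog : HasDerivAt (fun y : ℝ => Real.log (1 - y)) (-1 / (1 - y)) y := by
        simpa using hone.log h1y.ne'
      have hmul : HasDerivAt (fun y : ℝ => (1 - y) * Real.log (1 - y))
          ((-1) * Real.log (1 - y) + (1 - y) * (-1 / (1 - y))) y := hone.mul hlog
      have hsq : HasDerivAt (fun y : ℝ => y ^ 2 / 2) y y := by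
        simpa using (hasDerivAt_pow 2 y).div_const 2
      have := (hmul.fun_add (hasDerivAt_id y)).fun_sub hsq
      have hne : (1 - y) * (-1 / (1 - y)) = -1 := by field_simp
      refine this.congr_deriv ?_
      rw [hne]; ring
    · simp
    · intro y hy
      have h1y : (0:ℝ) < 1 - y := by linarith [hy.2, h1]
      have := Real.log_le_sub_one_of_pos h1y
      linarith
  linarith

lemma sum_pow_indicator {α : Type*} [DecidableEq α] (P Q : Finset α) (hQ : Q ⊆ P)
    (m : ℕ) (r : ℝ) :
    ∑ s : Fin m → ↥P, r ^ ((Finset.univ.filter fun i : Fin m => (s i : α) ∈ Q).card) =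
      (r * Q.card + ((P.card : ℝ) - Q.card)) ^ m := by
  have hsum : ∑ x : ↥P, (if (x : α) ∈ Q then r else 1) =
      r * Q.card + ((P.card : ℝ) - Q.card) := by
    rw [Finset.sum_coe_sort P (fun p => if p ∈ Q then r else (1:ℝ))]
    rw [Finset.sum_ite, Finset.sum_const, Finset.sum_const]
    have h1 : P.filter (· ∈ Q) = Q := by
      ext x; simp only [Finset.mem_filter]
      exact ⟨fun h => h.2, fun h => ⟨hQ h, h⟩⟩
    have h2 : (P.filter (fun x => x ∉ Q)).card = P.card - Q.card := by
      have h := Finset.card_filter_add_card_filter_not (s := P) (p := (· ∈ Q))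
      simp only [h1] at h
      omega
    rw [h1, h2, nsmul_eq_mul, nsmul_eq_mul, mul_one, mul_comm,
      Nat.cast_sub (Finset.card_le_card hQ)]
  rw [← hsum, Fintype.sum_pow (fun x : ↥P => if (x : α) ∈ Q then r else 1) m]
  apply Finset.sum_congr rfl
  intro s _
  rw [Finset.card_filter, ← Finset.prod_pow_eq_pow_sum]
  apply Finset.prod_congr rfl
  intro i _
  split <;> simp

/-- counting Markov inequality. -/
lemma card_filter_mul_le_sum {ι : Type*} [Fintype ι] (f : ι → ℝ) (p : ι → Prop)
    [DecidablePred p] (B : ℝ) (hf : ∀ i, 0 ≤ f i) (h : ∀ i, p i → B ≤ f i) :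
    ((Finset.univ.filter p).card : ℝ) * B ≤ ∑ i, f i := by
  calc ((Finset.univ.filter p).card : ℝ) * B
      = ∑ _i ∈ Finset.univ.filter p, B := by rw [Finset.sum_const, nsmul_eq_mul]
    _ ≤ ∑ i ∈ Finset.univ.filter p, f i :=
        Finset.sum_le_sum fun i hi => h i (Finset.mem_filter.1 hi).2
    _ ≤ ∑ i, f i :=
        Finset.sum_le_sum_of_subset_of_nonneg (Finset.subset_univ _) fun i _ _ => hf i

set_option maxHeartbeats 1000000 in
/-- For an `(ε₁,ε₂)`-significant instance, a uniform i.i.d. sample of size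
`m ≥ (3k/(δ²ε₁))·log(2k/η)` satisfies, with probability at least `1 − η`, that for every
cluster `C*_j` the number of sample points in `C*_j` lies in `(1±δ)·(|C*_j|/n)·m`. -/
theorem uniform_sample_cluster_count_concentration {D : ℕ} (k n z : ℕ) (hk : 0 < k)
    (hz0 : 0 < z) (hzn : z < n)
    (P Popt : Finset (EuclideanSpace ℝ (Fin D)))
    (hPcard : P.card = n) (hPopt : Popt ⊆ P) (hPoptcard : Popt.card = n - z)
    (C : Fin k → Finset (EuclideanSpace ℝ (Fin D)))
    (hCne : ∀ j, (C j).Nonempty)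
    (hCsub : ∀ j, C j ⊆ Popt)
    (hCdisj : ∀ j j', j ≠ j' → Disjoint (C j) (C j'))
    (hCcover : ∀ p ∈ Popt, ∃ j, p ∈ C j)
    (ε₁ ε₂ : ℝ) (hε₁ : 0 < ε₁) (hε₂ : 0 < ε₂)
    (hsig : ∀ j, (ε₁ / k) * n ≤ ((C j).card : ℝ))
    (hzval : (z : ℝ) = (ε₂ / k) * n)
    (η δ : ℝ) (hη0 : 0 < η) (hη1 : η < 1) (hδ0 : 0 < δ) (hδ1 : δ < 1)
    (m : ℕ) (hm : 0 < m)
    (hmlb : ((3 * k : ℝ) / (δ ^ 2 * ε₁)) * Real.log (2 * k / η) ≤ (m : ℝ)) :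
    1 - η ≤
      ((Finset.univ.filter fun s : Fin m → ↥P =>
          ∀ j : Fin k,
            (1 - δ) * (((C j).card : ℝ) / n) * m ≤
              ((Finset.univ.filter fun i : Fin m =>
                  (s i : EuclideanSpace ℝ (Fin D)) ∈ C j).card : ℝ) ∧
            ((Finset.univ.filter fun i : Fin m =>
                (s i : EuclideanSpace ℝ (Fin D)) ∈ C j).card : ℝ) ≤
              (1 + δ) * (((C j).card : ℝ) / n) * m).card : ℝ)
        / (Fintype.card (Fin m → ↥P) : ℝ) := by
  have hn : 0 < n := lt_trans hz0 hzn
  have hnR : (0:ℝ) < n := by exact_mod_cast hn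
  have hkR : (0:ℝ) < k := by exact_mod_cast hk
  have hmR : (0:ℝ) < m := by exact_mod_cast hm
  set L := Real.log (2 * k / η) with hLdef
  have hfrac : (1:ℝ) < 2 * k / η := by
    rw [lt_div_iff₀ hη0]
    have : (1:ℝ) ≤ k := by exact_mod_cast hk
    nlinarith
  have hL : 0 < L := Real.log_pos hfrac
  have hexpL : Real.exp (-L) = η / (2 * k) := by
    rw [Real.exp_neg, hLdef, Real.exp_log (by positivity), inv_div]
  -- the count function
  set X : Fin k → (Fin m → ↥P) → ℕ := fun j s =>
    (Finset.univ.filter fun i : Fin m => (s i : EuclideanSpace ℝ (Fin D)) ∈ C j).card with hXdef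
  -- per-cluster quantities
  have key : ∀ j : Fin k, L ≤ ((C j).card : ℝ) / n * m * δ ^ 2 / 3 := by
    intro j
    have ha := hsig j
    have hp : ε₁ / k ≤ ((C j).card : ℝ) / n := by
      rw [le_div_iff₀ hnR]; exact ha
    have h3 : 3 * (k:ℝ) * L ≤ m * (δ ^ 2 * ε₁) := by
      have h := hmlb
      rw [div_mul_eq_mul_div, div_le_iff₀ (by positivity)] at h
      linarith
    have hp' : ε₁ / k * m * δ ^ 2 / 3 ≤ ((C j).card : ℝ) / n * m * δ ^ 2 / 3 := by
      have := mul_le_mul_of_nonneg_right hp (by positivity : (0:ℝ) ≤ m * δ ^ 2 / 3)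
      calc ε₁ / k * m * δ ^ 2 / 3 = ε₁ / k * (m * δ ^ 2 / 3) := by ring
        _ ≤ ((C j).card : ℝ) / n * (m * δ ^ 2 / 3) := this
        _ = ((C j).card : ℝ) / n * m * δ ^ 2 / 3 := by ring
    refine le_trans ?_ hp'
    rw [div_mul_eq_mul_div, div_mul_eq_mul_div, div_div, le_div_iff₀ (by positivity)]
    calc L * (k * 3) = 3 * k * L := by ring
      _ ≤ m * (δ ^ 2 * ε₁) := h3
      _ = ε₁ * m * δ ^ 2 := by ring
  -- basic facts per cluster
  have hCP : ∀ j, C j ⊆ P := fun j => (hCsub j).trans hPopt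
  have han : ∀ j, ((C j).card : ℝ) ≤ n := by
    intro j
    have := Finset.card_le_card (hCP j)
    rw [hPcard] at this
    exact_mod_cast this
  have ha0 : ∀ j, (0:ℝ) < (C j).card := by
    intro j
    have := (hCne j).card_pos
    exact_mod_cast this
  -- upper tail bound
  have claimU : ∀ j : Fin k,
      (((Finset.univ.filter fun s : Fin m → ↥P =>
        (1 + δ) * (((C j).card : ℝ) / n) * m < (X j s : ℝ)).card : ℝ))
      ≤ η / (2 * k) * (n:ℝ) ^ m := by
    intro j
    set a : ℝ := ((C j).card : ℝ) with hadef
    set p : ℝ := a / n with hpdef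
    have hp0 : 0 < p := div_pos (ha0 j) hnR
    have hp1 : p ≤ 1 := by rw [hpdef, div_le_one hnR]; exact han j
    set r : ℝ := 1 + δ with hrdef
    have hr1 : (1:ℝ) ≤ r := by rw [hrdef]; linarith
    have hr0 : (0:ℝ) < r := by linarith
    set t : ℝ := (1 + δ) * p * m with htdef
    have hrt0 : (0:ℝ) < r ^ t := Real.rpow_pos_of_pos hr0 t
    have hmarkov : (((Finset.univ.filter fun s : Fin m → ↥P =>
        (1 + δ) * p * m < (X j s : ℝ)).card : ℝ)) * r ^ t
        ≤ ∑ s : Fin m → ↥P, r ^ (X j s) := by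
      apply card_filter_mul_le_sum
      · intro s; exact pow_nonneg hr0.le _
      · intro s hs
        rw [← Real.rpow_natCast r (X j s)]
        exact Real.rpow_le_rpow_of_exponent_le hr1 (le_of_lt hs)
    have hsum : ∑ s : Fin m → ↥P, r ^ (X j s) = (r * a + ((n:ℝ) - a)) ^ m := by
      rw [hXdef]
      have := sum_pow_indicator P (C j) (hCP j) m r
      rw [hPcard] at this
      exact this
    have hbase : r * a + ((n:ℝ) - a) ≤ (n:ℝ) * Real.exp (δ * p) := by
      have h1 : δ * p + 1 ≤ Real.exp (δ * p) := Real.add_one_le_exp _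
      have h2 : r * a + ((n:ℝ) - a) = n * (1 + δ * p) := by
        rw [hrdef, hpdef]; field_simp; ring
      rw [h2]
      have := mul_le_mul_of_nonneg_left (by linarith : 1 + δ * p ≤ Real.exp (δ * p)) hnR.le
      linarith
    have hpow : (r * a + ((n:ℝ) - a)) ^ m ≤ (n:ℝ) ^ m * Real.exp (δ * p * m) := by
      have hnn : 0 ≤ r * a + ((n:ℝ) - a) := by
        have h1 : 0 ≤ r * a := mul_nonneg hr0.le (ha0 j).le
        have := han j; nlinarith [ha0 j]
      calc (r * a + ((n:ℝ) - a)) ^ m ≤ ((n:ℝ) * Real.exp (δ * p)) ^ m :=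
            pow_le_pow_left₀ hnn hbase m
        _ = (n:ℝ) ^ m * Real.exp (δ * p) ^ m := mul_pow _ _ m
        _ = (n:ℝ) ^ m * Real.exp (δ * p * m) := by
            rw [← Real.exp_nat_mul]; ring_nf
    have hexpbound : Real.exp (δ * p * m - Real.log r * t) ≤ η / (2 * k) := by
      rw [← hexpL]
      apply Real.exp_le_exp.2
      have hcore := chernoff_upper_core hδ0.le hδ1.le
      have hkey := key j
      have hpm : 0 ≤ p * m := by positivity
      have h1 : δ * p * m - Real.log r * t =
          -((1 + δ) * Real.log (1 + δ) - δ) * (p * m) := by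
        rw [htdef, hrdef]; ring
      rw [h1]
      have h2 : δ ^ 2 / 3 * (p * m) ≤ ((1 + δ) * Real.log (1 + δ) - δ) * (p * m) :=
        mul_le_mul_of_nonneg_right hcore hpm
      have h3 : L ≤ δ ^ 2 / 3 * (p * m) := by
        have := key j
        rw [hpdef]
        calc L ≤ a / n * m * δ ^ 2 / 3 := this
          _ = δ ^ 2 / 3 * (a / n * m) := by ring
      linarith
    have hrt : r ^ t = Real.exp (Real.log r * t) := Real.rpow_def_of_pos hr0 t
    have hfinal : (n:ℝ) ^ m * Real.exp (δ * p * m) ≤ (η / (2 * k) * (n:ℝ) ^ m) * r ^ t := by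
      rw [hrt]
      have h1 : Real.exp (δ * p * m) = Real.exp (δ * p * m - Real.log r * t) *
          Real.exp (Real.log r * t) := by
        rw [← Real.exp_add]; ring_nf
      rw [h1]
      have h2 := mul_le_mul_of_nonneg_right hexpbound (Real.exp_pos (Real.log r * t)).le
      calc (n:ℝ) ^ m * (Real.exp (δ * p * m - Real.log r * t) * Real.exp (Real.log r * t))
          ≤ (n:ℝ) ^ m * (η / (2 * k) * Real.exp (Real.log r * t)) := by
            apply mul_le_mul_of_nonneg_left _ (by positivity)
            exact h2
        _ = η / (2 * k) * (n:ℝ) ^ m * Real.exp (Real.log r * t) := by ring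
    have := le_trans (hmarkov.trans (le_of_eq hsum)) (hpow.trans hfinal)
    exact le_of_mul_le_mul_right this hrt0
  -- lower tail bound
  have claimL : ∀ j : Fin k,
      (((Finset.univ.filter fun s : Fin m → ↥P =>
        (X j s : ℝ) < (1 - δ) * (((C j).card : ℝ) / n) * m).card : ℝ))
      ≤ η / (2 * k) * (n:ℝ) ^ m := by
    intro j
    set a : ℝ := ((C j).card : ℝ) with hadef
    set p : ℝ := a / n with hpdef
    have hp0 : 0 < p := div_pos (ha0 j) hnR
    have hp1 : p ≤ 1 := by rw [hpdef, div_le_one hnR]; exact han j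
    set r : ℝ := 1 - δ with hrdef
    have hr0 : (0:ℝ) < r := by rw [hrdef]; linarith
    have hr1 : r ≤ 1 := by rw [hrdef]; linarith
    set t : ℝ := (1 - δ) * p * m with htdef
    have hrt0 : (0:ℝ) < r ^ t := Real.rpow_pos_of_pos hr0 t
    have hmarkov : (((Finset.univ.filter fun s : Fin m → ↥P =>
        (X j s : ℝ) < (1 - δ) * p * m).card : ℝ)) * r ^ t
        ≤ ∑ s : Fin m → ↥P, r ^ (X j s) := by
      apply card_filter_mul_le_sum
      · intro s; exact pow_nonneg hr0.le _
      · intro s hs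
        rw [← Real.rpow_natCast r (X j s)]
        exact Real.rpow_le_rpow_of_exponent_ge hr0 hr1 (le_of_lt hs)
    have hsum : ∑ s : Fin m → ↥P, r ^ (X j s) = (r * a + ((n:ℝ) - a)) ^ m := by
      rw [hXdef]
      have := sum_pow_indicator P (C j) (hCP j) m r
      rw [hPcard] at this
      exact this
    have hbase : r * a + ((n:ℝ) - a) ≤ (n:ℝ) * Real.exp (-(δ * p)) := by
      have h1 : -(δ * p) + 1 ≤ Real.exp (-(δ * p)) := Real.add_one_le_exp _
      have h2 : r * a + ((n:ℝ) - a) = n * (1 - δ * p) := by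
        rw [hrdef, hpdef]; field_simp; ring
      rw [h2]
      have := mul_le_mul_of_nonneg_left
        (by linarith : 1 - δ * p ≤ Real.exp (-(δ * p))) hnR.le
      linarith
    have hpow : (r * a + ((n:ℝ) - a)) ^ m ≤ (n:ℝ) ^ m * Real.exp (-(δ * p) * m) := by
      have hnn : 0 ≤ r * a + ((n:ℝ) - a) := by
        have h1 : 0 ≤ r * a := mul_nonneg hr0.le (ha0 j).le
        have := han j; nlinarith [ha0 j]
      calc (r * a + ((n:ℝ) - a)) ^ m ≤ ((n:ℝ) * Real.exp (-(δ * p))) ^ m :=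
            pow_le_pow_left₀ hnn hbase m
        _ = (n:ℝ) ^ m * Real.exp (-(δ * p)) ^ m := mul_pow _ _ m
        _ = (n:ℝ) ^ m * Real.exp (-(δ * p) * m) := by
            rw [← Real.exp_nat_mul]; ring_nf
    have hexpbound : Real.exp (-(δ * p) * m - Real.log r * t) ≤ η / (2 * k) := by
      rw [← hexpL]
      apply Real.exp_le_exp.2
      have hcore := chernoff_lower_core hδ0.le hδ1
      have hpm : 0 ≤ p * m := by positivity
      have h1 : -(δ * p) * m - Real.log r * t =
          -((1 - δ) * Real.log (1 - δ) + δ) * (p * m) := by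
        rw [htdef, hrdef]; ring
      rw [h1]
      have h2 : δ ^ 2 / 2 * (p * m) ≤ ((1 - δ) * Real.log (1 - δ) + δ) * (p * m) :=
        mul_le_mul_of_nonneg_right hcore hpm
      have h3 : L ≤ δ ^ 2 / 2 * (p * m) := by
        have hk3 := key j
        rw [hpdef]
        have h23 : a / n * m * δ ^ 2 / 3 ≤ δ ^ 2 / 2 * (a / n * m) := by
          have hx : 0 ≤ a / n * m := by positivity
          nlinarith
        exact le_trans hk3 h23
      linarith
    have hrt : r ^ t = Real.exp (Real.log r * t) := Real.rpow_def_of_pos hr0 t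
    have hfinal : (n:ℝ) ^ m * Real.exp (-(δ * p) * m) ≤
        (η / (2 * k) * (n:ℝ) ^ m) * r ^ t := by
      rw [hrt]
      have h1 : Real.exp (-(δ * p) * m) = Real.exp (-(δ * p) * m - Real.log r * t) *
          Real.exp (Real.log r * t) := by
        rw [← Real.exp_add]; ring_nf
      rw [h1]
      have h2 := mul_le_mul_of_nonneg_right hexpbound (Real.exp_pos (Real.log r * t)).le
      calc (n:ℝ) ^ m * (Real.exp (-(δ * p) * m - Real.log r * t) *
            Real.exp (Real.log r * t))
          ≤ (n:ℝ) ^ m * (η / (2 * k) * Real.exp (Real.log r * t)) := by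
            apply mul_le_mul_of_nonneg_left _ (by positivity)
            exact h2
        _ = η / (2 * k) * (n:ℝ) ^ m * Real.exp (Real.log r * t) := by ring
    have := le_trans (hmarkov.trans (le_of_eq hsum)) (hpow.trans hfinal)
    exact le_of_mul_le_mul_right this hrt0
  -- union bound
  set good : Finset (Fin m → ↥P) := Finset.univ.filter fun s : Fin m → ↥P =>
      ∀ j : Fin k,
        (1 - δ) * (((C j).card : ℝ) / n) * m ≤ (X j s : ℝ) ∧
        (X j s : ℝ) ≤ (1 + δ) * (((C j).card : ℝ) / n) * m with hgooddef
  set badU : Fin k → Finset (Fin m → ↥P) := fun j =>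
    Finset.univ.filter fun s : Fin m → ↥P =>
      (1 + δ) * (((C j).card : ℝ) / n) * m < (X j s : ℝ) with hbadUdef
  set badL : Fin k → Finset (Fin m → ↥P) := fun j =>
    Finset.univ.filter fun s : Fin m → ↥P =>
      (X j s : ℝ) < (1 - δ) * (((C j).card : ℝ) / n) * m with hbadLdef
  set bad : Finset (Fin m → ↥P) := Finset.univ.filter fun s : Fin m → ↥P =>
      ¬ ∀ j : Fin k,
        (1 - δ) * (((C j).card : ℝ) / n) * m ≤ (X j s : ℝ) ∧
        (X j s : ℝ) ≤ (1 + δ) * (((C j).card : ℝ) / n) * m with hbaddef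
  have hbadsub : bad ⊆ Finset.univ.biUnion fun j => badL j ∪ badU j := by
    intro s hs
    rw [hbaddef, Finset.mem_filter] at hs
    push_neg at hs
    obtain ⟨j, hj⟩ := hs.2
    rw [Finset.mem_biUnion]
    refine ⟨j, Finset.mem_univ j, ?_⟩
    rw [Finset.mem_union, hbadLdef, hbadUdef, Finset.mem_filter, Finset.mem_filter]
    by_cases hle : (1 - δ) * (((C j).card : ℝ) / n) * m ≤ (X j s : ℝ)
    · exact Or.inr ⟨Finset.mem_univ s, hj hle⟩
    · exact Or.inl ⟨Finset.mem_univ s, not_le.1 hle⟩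
  have hbadcard : (bad.card : ℝ) ≤ η * (n:ℝ) ^ m := by
    have h1 : bad.card ≤ ∑ j : Fin k, (badL j ∪ badU j).card :=
      le_trans (Finset.card_le_card hbadsub) (Finset.card_biUnion_le)
    have h2 : ∀ j, ((badL j ∪ badU j).card : ℝ) ≤ 2 * (η / (2 * k) * (n:ℝ) ^ m) := by
      intro j
      have := Finset.card_union_le (badL j) (badU j)
      have hcast : ((badL j ∪ badU j).card : ℝ) ≤ ((badL j).card : ℝ) + ((badU j).card : ℝ) := by
        exact_mod_cast this
      have hU := claimU j
      have hLc := claimL j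
      linarith
    calc (bad.card : ℝ) ≤ ∑ j : Fin k, ((badL j ∪ badU j).card : ℝ) := by
          exact_mod_cast h1
      _ ≤ ∑ _j : Fin k, 2 * (η / (2 * k) * (n:ℝ) ^ m) := Finset.sum_le_sum fun j _ => h2 j
      _ = k * (2 * (η / (2 * k) * (n:ℝ) ^ m)) := by
          rw [Finset.sum_const, Finset.card_univ, Fintype.card_fin, nsmul_eq_mul]
      _ = η * (n:ℝ) ^ m := by field_simp
  have hcardΩ : (Fintype.card (Fin m → ↥P) : ℝ) = (n:ℝ) ^ m := by
    rw [Fintype.card_fun, Fintype.card_coe, hPcard, Fintype.card_fin]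
    push_cast; ring
  have hsplit : (good.card : ℝ) + (bad.card : ℝ) = (n:ℝ) ^ m := by
    have := Finset.card_filter_add_card_filter_not
      (s := (Finset.univ : Finset (Fin m → ↥P)))
      (p := fun s => ∀ j : Fin k,
        (1 - δ) * (((C j).card : ℝ) / n) * m ≤ (X j s : ℝ) ∧
        (X j s : ℝ) ≤ (1 + δ) * (((C j).card : ℝ) / n) * m)
    rw [Finset.card_univ] at this
    have hcast : (good.card : ℝ) + (bad.card : ℝ) = (Fintype.card (Fin m → ↥P) : ℝ) := by
      exact_mod_cast this
    rw [hcast, hcardΩ]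
  rw [hcardΩ, le_div_iff₀ (show (0:ℝ) < (n:ℝ) ^ m by positivity)]
  have hgood : (1 - η) * (n:ℝ) ^ m ≤ (good.card : ℝ) := by linarith
  exact hgood
end

section
/- Let P ⊆ ℝ^D be finite, let P_opt ⊆ P be partitioned into nonempty clusters C*_1,…,C*_k, and suppose each C*_j is contained in some Euclidean ball of radius r_opt ≥ 0. Let S ⊆ P satisfy S ∩ C*_j ≠ ∅ for every j ∈ {1,…,k}, and let H ⊆ ℝ^D be a nonempty finite set such that dist(q, H) ≤ 2·r_opt for every q ∈ S. Then dist(p, H) ≤ 4·r_opt for every p ∈ P_opt. -/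
open scoped Classical
open Finset

/-- If each optimal cluster is contained in a ball of radius `r_opt`, `S` hits
every cluster, and every point of `S` is within `2·r_opt` of the center set `H`, then every
point of `P_opt` is within `4·r_opt` of `H`. -/
theorem kcenter_four_approx_core {D : ℕ} (k : ℕ) (hk : 0 < k)
    (P Popt : Finset (EuclideanSpace ℝ (Fin D))) (hPopt : Popt ⊆ P)
    (C : Fin k → Finset (EuclideanSpace ℝ (Fin D)))
    (hCne : ∀ j, (C j).Nonempty)
    (hCsub : ∀ j, C j ⊆ Popt)
    (hCdisj : ∀ j j', j ≠ j' → Disjoint (C j) (C j'))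
    (hCcover : ∀ p ∈ Popt, ∃ j, p ∈ C j)
    (ropt : ℝ) (hropt : 0 ≤ ropt)
    (hball : ∀ j, ∃ x : EuclideanSpace ℝ (Fin D), ∀ p ∈ C j, dist p x ≤ ropt)
    (S : Finset (EuclideanSpace ℝ (Fin D))) (hS : S ⊆ P)
    (hSC : ∀ j, (S ∩ C j).Nonempty)
    (H : Finset (EuclideanSpace ℝ (Fin D))) (hH : H.Nonempty)
    (hHS : ∀ q ∈ S, Metric.infDist q (H : Set (EuclideanSpace ℝ (Fin D))) ≤ 2 * ropt) :
    ∀ p ∈ Popt, Metric.infDist p (H : Set (EuclideanSpace ℝ (Fin D))) ≤ 4 * ropt := by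
  intro p hp
  obtain ⟨j, hpj⟩ := hCcover p hp
  obtain ⟨s, hs⟩ := hSC j
  rw [Finset.mem_inter] at hs
  obtain ⟨x, hx⟩ := hball j
  have h1 : dist p s ≤ 2 * ropt := by
    calc dist p s ≤ dist p x + dist s x := dist_triangle_right _ _ _
    _ ≤ ropt + ropt := add_le_add (hx p hpj) (hx s hs.2)
    _ = 2 * ropt := by ring
  calc Metric.infDist p (H : Set (EuclideanSpace ℝ (Fin D)))
      ≤ Metric.infDist s (H : Set (EuclideanSpace ℝ (Fin D))) + dist p s :=
        Metric.infDist_le_infDist_add_dist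
    _ = dist p s + Metric.infDist s (H : Set (EuclideanSpace ℝ (Fin D))) := add_comm _ _
    _ ≤ 2 * ropt + 2 * ropt := add_le_add h1 (hHS s hs.1)
    _ = 4 * ropt := by ring
end

section
/- Given an (ε₁,ε₂)-significant instance of k-center clustering with z outliers whose optimal clusters C*_1,…,C*_k are each contained in a Euclidean ball of radius r_opt, let η ∈ (0,1), let m be a positive integer with m ≥ (k/ε₁)·log(k/η), and let k' := ⌈(ε₂/(k·η))·m⌉. Draw an i.i.d. uniform sample s : {1,…,m} → P. Then with probability at least 1 − 2η the following holds: for every nonempty finite set H ⊆ ℝ^D with |H| = k + k' satisfying max_{1≤i≤m} dist(s_i, H) ≤ 2 · min{ max_{1≤i≤m} dist(s_i, K) : K ⊆ ℝ^D, |K| = k + k' } (i.e., H is a 2-approximate solution of (k+k')-center clustering on the sample), one has Δ^{-z}_∞(P, H) ≤ 4·r_opt. -/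
open scoped Classical
open Finset

/-- Cardinality of the subtype-filter corresponding to a subset. -/
lemma aux_card_filter_coe {α : Type*} (P Q : Finset α) (hQ : Q ⊆ P) :
    (Finset.univ.filter fun p : ↥P => (p : α) ∈ Q).card = Q.card := by
  classical
  refine Finset.card_bij (fun p _ => (p : α)) ?_ ?_ ?_
  · intro a ha; exact (Finset.mem_filter.mp ha).2
  · intro a _ b _ h; exact Subtype.ext h
  · intro b hb; exact ⟨⟨b, hQ hb⟩, Finset.mem_filter.mpr ⟨Finset.mem_univ _, hb⟩, rfl⟩

/-- Cardinality of the complementary subtype-filter. -/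
lemma aux_card_filter_coe_not {α : Type*} (P Q : Finset α) (hQ : Q ⊆ P) :
    (Finset.univ.filter fun p : ↥P => (p : α) ∉ Q).card = P.card - Q.card := by
  classical
  have h1 := aux_card_filter_coe P Q hQ
  have h2 : (Finset.univ.filter fun p : ↥P => (p : α) ∈ Q).card
      + (Finset.univ.filter fun p : ↥P => (p : α) ∉ Q).card
      = (Finset.univ : Finset ↥P).card :=
    Finset.card_filter_add_card_filter_not _
  have h3 : (Finset.univ : Finset ↥P).card = P.card := by
    rw [Finset.card_univ, Fintype.card_coe]
  omega

/-- Counting Markov inequality. -/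
lemma aux_markov {β : Type*} [Fintype β] (f : β → ℕ) (t : ℕ) :
    (Finset.univ.filter fun b => t ≤ f b).card * t ≤ ∑ b, f b := by
  classical
  calc (Finset.univ.filter fun b => t ≤ f b).card * t
      = ∑ _b ∈ (Finset.univ.filter fun b => t ≤ f b), t := by
        rw [Finset.sum_const, smul_eq_mul]
    _ ≤ ∑ b ∈ (Finset.univ.filter fun b => t ≤ f b), f b :=
        Finset.sum_le_sum fun b hb => (Finset.mem_filter.mp hb).2
    _ ≤ ∑ b, f b := Finset.sum_le_sum_of_subset (Finset.filter_subset _ _)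

/-- Summing a function of a single coordinate over all tuples. -/
lemma aux_sum_coord {β : Type*} [Fintype β] {m : ℕ} (i : Fin m) (g : β → ℕ) :
    ∑ s : Fin m → β, g (s i) = (∑ b, g b) * (Fintype.card β) ^ (m - 1) := by
  classical
  have hsum := Equiv.sum_comp (Equiv.funSplitAt i β).symm (fun s : Fin m → β => g (s i))
  rw [← hsum]
  have he : ∀ x : β × ({ j : Fin m // j ≠ i } → β),
      ((Equiv.funSplitAt i β).symm x) i = x.1 := by
    intro x
    simp [Equiv.funSplitAt, Equiv.piSplitAt]
  have hcard : Fintype.card ({ j : Fin m // j ≠ i } → β)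
      = (Fintype.card β) ^ (m - 1) := by
    rw [Fintype.card_fun]
    congr 1
    have : Fintype.card { j : Fin m // j ≠ i } = Fintype.card (Fin m) - 1 := by
      rw [Fintype.card_subtype_compl, Fintype.card_subtype_eq]
    simpa using this
  calc (∑ x : β × ({ j : Fin m // j ≠ i } → β), g (((Equiv.funSplitAt i β).symm x) i))
      = ∑ x : β × ({ j : Fin m // j ≠ i } → β), g x.1 := by
        exact Finset.sum_congr rfl fun x _ => by rw [he x]
    _ = ∑ b : β, ∑ _r : { j : Fin m // j ≠ i } → β, g b := Fintype.sum_prod_type _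
    _ = ∑ b : β, g b * (Fintype.card β) ^ (m - 1) := by
        refine Finset.sum_congr rfl fun b _ => ?_
        rw [Finset.sum_const, smul_eq_mul, mul_comm, Finset.card_univ, hcard]
    _ = (∑ b, g b) * (Fintype.card β) ^ (m - 1) := by rw [← Finset.sum_mul]

/-- Uniform sampling for k-center clustering with outliers (Algorithm I /
Theorem 1). For an `(ε₁,ε₂)`-significant instance with optimal radius `r_opt`, sample size
`m ≥ (k/ε₁)·log(k/η)`, and `k' = ⌈(ε₂/(kη))·m⌉`: with probability at least `1 − 2η`, every
2-approximate `(k+k')`-center solution `H` on the sample satisfies `Δ^{-z}_∞(P,H) ≤ 4·r_opt`. -/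
theorem uniform_sampling_kcenter_outliers_I {D : ℕ} (k n z : ℕ) (hk : 0 < k)
    (hz0 : 0 < z) (hzn : z < n)
    (P Popt : Finset (EuclideanSpace ℝ (Fin D)))
    (hPcard : P.card = n) (hPopt : Popt ⊆ P) (hPoptcard : Popt.card = n - z)
    (C : Fin k → Finset (EuclideanSpace ℝ (Fin D)))
    (hCne : ∀ j, (C j).Nonempty)
    (hCsub : ∀ j, C j ⊆ Popt)
    (hCdisj : ∀ j j', j ≠ j' → Disjoint (C j) (C j'))
    (hCcover : ∀ p ∈ Popt, ∃ j, p ∈ C j)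
    (ropt : ℝ) (hropt : 0 ≤ ropt)
    (hball : ∀ j, ∃ x : EuclideanSpace ℝ (Fin D), ∀ p ∈ C j, dist p x ≤ ropt)
    (ε₁ ε₂ : ℝ) (hε₁ : 0 < ε₁) (hε₂ : 0 < ε₂)
    (hsig : ∀ j, (ε₁ / k) * n ≤ ((C j).card : ℝ))
    (hzval : (z : ℝ) = (ε₂ / k) * n)
    (η : ℝ) (hη0 : 0 < η) (hη1 : η < 1)
    (m : ℕ) (hm : 0 < m) (hmlb : ((k : ℝ) / ε₁) * Real.log (k / η) ≤ (m : ℝ))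
    (k' : ℕ) (hk' : k' = ⌈ε₂ / (k * η) * m⌉₊) :
    1 - 2 * η ≤
      ((Finset.univ.filter fun s : Fin m → ↥P =>
          ∀ H : Finset (EuclideanSpace ℝ (Fin D)), H.Nonempty → H.card = k + k' →
            (∀ K : Finset (EuclideanSpace ℝ (Fin D)), K.Nonempty → K.card = k + k' →
              (⨆ i : Fin m, Metric.infDist (s i : EuclideanSpace ℝ (Fin D))
                  (H : Set (EuclideanSpace ℝ (Fin D)))) ≤
                2 * ⨆ i : Fin m, Metric.infDist (s i : EuclideanSpace ℝ (Fin D))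
                  (K : Set (EuclideanSpace ℝ (Fin D)))) →
            ∃ P' ⊆ P, P'.card = n - z ∧
              ∀ p ∈ P', Metric.infDist p (H : Set (EuclideanSpace ℝ (Fin D))) ≤
                4 * ropt).card : ℝ)
        / (Fintype.card (Fin m → ↥P) : ℝ) := by
  classical
  have hn : 0 < n := lt_of_le_of_lt (Nat.zero_le z) hzn
  have hnR : (0 : ℝ) < n := by exact_mod_cast hn
  have hkR : (0 : ℝ) < k := by exact_mod_cast hk
  have hmR : (0 : ℝ) < m := by exact_mod_cast hm
  have hNpos : 0 < P.card := by rw [hPcard]; exact hn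
  have hPne : P.Nonempty := Finset.card_pos.mp hNpos
  have hPty : Nonempty ↥P := ⟨⟨hPne.choose, hPne.choose_spec⟩⟩
  have hFinm : Nonempty (Fin m) := ⟨⟨0, hm⟩⟩
  have hk'pos : 0 < k' := by
    rw [hk']
    exact Nat.ceil_pos.mpr (mul_pos (div_pos hε₂ (mul_pos hkR hη0)) hmR)
  have htotal : Fintype.card (Fin m → ↥P) = n ^ m := by
    rw [Fintype.card_fun, Fintype.card_coe, Fintype.card_fin, hPcard]
  have htotR : (0 : ℝ) < ((Fintype.card (Fin m → ↥P)) : ℝ) := by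
    rw [htotal]; positivity
  -- Dispatch the degenerate case D = 0 (no finset of card k + k' exists).
  by_cases hD : D = 0
  · subst hD
    have hsub : Subsingleton (EuclideanSpace ℝ (Fin 0)) := by
      infer_instance
    have hall : ∀ s : Fin m → ↥P,
        ∀ H : Finset (EuclideanSpace ℝ (Fin 0)), H.Nonempty → H.card = k + k' →
          (∀ K : Finset (EuclideanSpace ℝ (Fin 0)), K.Nonempty → K.card = k + k' →
            (⨆ i : Fin m, Metric.infDist (s i : EuclideanSpace ℝ (Fin 0))
                (H : Set (EuclideanSpace ℝ (Fin 0)))) ≤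
              2 * ⨆ i : Fin m, Metric.infDist (s i : EuclideanSpace ℝ (Fin 0))
                (K : Set (EuclideanSpace ℝ (Fin 0)))) →
          ∃ P' ⊆ P, P'.card = n - z ∧
            ∀ p ∈ P', Metric.infDist p (H : Set (EuclideanSpace ℝ (Fin 0))) ≤
              4 * ropt := by
      intro s H hHne hHcard _
      exfalso
      have h2 : 1 < H.card := by omega
      obtain ⟨a, _, b, _, hab⟩ := Finset.one_lt_card.mp h2
      exact hab (Subsingleton.elim a b)
    have hle : (1 : ℝ) - 2 * η ≤ 1 := by linarith
    refine hle.trans ?_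
    rw [le_div_iff₀ htotR, one_mul, ← Finset.card_univ]
    refine Nat.cast_le.mpr (Finset.card_le_card fun s _ => ?_)
    simp only [Finset.mem_filter]
    exact ⟨Finset.mem_univ s, hall s⟩
  have hDpos : 0 < D := Nat.pos_of_ne_zero hD
  have hInf : Infinite (EuclideanSpace ℝ (Fin D)) := by
    refine Infinite.of_injective
      (fun r : ℝ => EuclideanSpace.single (⟨0, hDpos⟩ : Fin D) r) ?_
    intro a b hab
    have := congrArg (fun v : EuclideanSpace ℝ (Fin D) => v ⟨0, hDpos⟩) hab
    simpa [EuclideanSpace.single_apply] using this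
  choose x hx using hball
  -- ε₁ ≤ k
  have hε₁k : ε₁ / k ≤ 1 := by
    obtain ⟨j⟩ : Nonempty (Fin k) := ⟨⟨0, hk⟩⟩
    have h1 : ((C j).card : ℝ) ≤ n := by
      have : (C j).card ≤ n := le_trans (Finset.card_le_card
        (fun p hp => hPopt (hCsub j hp))) (le_of_eq hPcard)
      exact_mod_cast this
    have := hsig j
    by_contra hcon
    push_neg at hcon
    nlinarith
  -- STEP 1: the geometric argument on good samples
  have step1 : ∀ s : Fin m → ↥P,
      (∀ j, ∃ i, ((s i : EuclideanSpace ℝ (Fin D))) ∈ C j) →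
      ((Finset.univ.filter fun i : Fin m =>
          (s i : EuclideanSpace ℝ (Fin D)) ∉ Popt).card ≤ k') →
      ∀ H : Finset (EuclideanSpace ℝ (Fin D)), H.Nonempty → H.card = k + k' →
        (∀ K : Finset (EuclideanSpace ℝ (Fin D)), K.Nonempty → K.card = k + k' →
          (⨆ i : Fin m, Metric.infDist (s i : EuclideanSpace ℝ (Fin D))
              (H : Set (EuclideanSpace ℝ (Fin D)))) ≤
            2 * ⨆ i : Fin m, Metric.infDist (s i : EuclideanSpace ℝ (Fin D))
              (K : Set (EuclideanSpace ℝ (Fin D)))) →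
        ∃ P' ⊆ P, P'.card = n - z ∧
          ∀ p ∈ P', Metric.infDist p (H : Set (EuclideanSpace ℝ (Fin D))) ≤
            4 * ropt := by
    intro s hA hB H hHne hHcard happrox
    set Kout := (Finset.univ.filter fun i : Fin m =>
        (s i : EuclideanSpace ℝ (Fin D)) ∉ Popt).image
        (fun i => (s i : EuclideanSpace ℝ (Fin D))) with hKoutdef
    set K0 := (Finset.univ.image x) ∪ Kout with hK0def
    have hK0card : K0.card ≤ k + k' := by
      refine (Finset.card_union_le _ _).trans (add_le_add ?_ ?_)
      · exact (Finset.card_image_le).trans (by simp)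
      · exact (Finset.card_image_le).trans hB
    obtain ⟨K, hK0K, hKcard⟩ := Infinite.exists_superset_card_eq K0 (k + k') hK0card
    have hKne : K.Nonempty := Finset.card_pos.mp (by rw [hKcard]; omega)
    have hsupK : (⨆ i : Fin m, Metric.infDist (s i : EuclideanSpace ℝ (Fin D))
        (K : Set (EuclideanSpace ℝ (Fin D)))) ≤ ropt := by
      refine ciSup_le fun i => ?_
      by_cases hi : (s i : EuclideanSpace ℝ (Fin D)) ∈ Popt
      · obtain ⟨j, hj⟩ := hCcover _ hi
        have hxK : x j ∈ K :=
          hK0K (Finset.mem_union_left _ (Finset.mem_image_of_mem x (Finset.mem_univ j)))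
        exact (Metric.infDist_le_dist_of_mem hxK).trans (hx j _ hj)
      · have hsK : (s i : EuclideanSpace ℝ (Fin D)) ∈ K := by
          refine hK0K (Finset.mem_union_right _ ?_)
          exact Finset.mem_image_of_mem _ (Finset.mem_filter.mpr ⟨Finset.mem_univ _, hi⟩)
        have hle0 : Metric.infDist (s i : EuclideanSpace ℝ (Fin D))
            (K : Set (EuclideanSpace ℝ (Fin D))) ≤
            dist (s i : EuclideanSpace ℝ (Fin D)) (s i : EuclideanSpace ℝ (Fin D)) :=
          Metric.infDist_le_dist_of_mem (Finset.mem_coe.mpr hsK)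
        rw [dist_self] at hle0
        exact hle0.trans hropt
    have hsupH : (⨆ i : Fin m, Metric.infDist (s i : EuclideanSpace ℝ (Fin D))
        (H : Set (EuclideanSpace ℝ (Fin D)))) ≤ 2 * ropt := by
      have := happrox K hKne hKcard
      linarith
    refine ⟨Popt, hPopt, hPoptcard, ?_⟩
    intro p hp
    obtain ⟨j, hj⟩ := hCcover p hp
    obtain ⟨i, hi⟩ := hA j
    have h1 : Metric.infDist (s i : EuclideanSpace ℝ (Fin D))
        (H : Set (EuclideanSpace ℝ (Fin D))) ≤ 2 * ropt :=
      le_trans (le_ciSup (f := fun i : Fin m => Metric.infDist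
        (s i : EuclideanSpace ℝ (Fin D)) (H : Set (EuclideanSpace ℝ (Fin D))))
        (Set.Finite.bddAbove (Set.finite_range _)) i) hsupH
    have h2 : dist p (s i : EuclideanSpace ℝ (Fin D)) ≤ 2 * ropt := by
      calc dist p (s i : EuclideanSpace ℝ (Fin D))
          ≤ dist p (x j) + dist (s i : EuclideanSpace ℝ (Fin D)) (x j) :=
            dist_triangle_right _ _ _
        _ ≤ ropt + ropt := add_le_add (hx j p hj) (hx j _ hi)
        _ = 2 * ropt := by ring
    calc Metric.infDist p (H : Set (EuclideanSpace ℝ (Fin D)))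
        ≤ Metric.infDist (s i : EuclideanSpace ℝ (Fin D))
            (H : Set (EuclideanSpace ℝ (Fin D)))
          + dist p (s i : EuclideanSpace ℝ (Fin D)) :=
          Metric.infDist_le_infDist_add_dist
      _ ≤ 2 * ropt + 2 * ropt := add_le_add h1 h2
      _ = 4 * ropt := by ring
  -- STEP 2: counting
  set G := Finset.univ.filter (fun s : Fin m → ↥P =>
      (∀ j, ∃ i, ((s i : EuclideanSpace ℝ (Fin D))) ∈ C j) ∧
      (Finset.univ.filter fun i : Fin m =>
        (s i : EuclideanSpace ℝ (Fin D)) ∉ Popt).card ≤ k') with hGdef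
  -- bad events
  set A : Fin k → Finset (Fin m → ↥P) := fun j =>
    Finset.univ.filter (fun s : Fin m → ↥P =>
      ∀ i, (s i : EuclideanSpace ℝ (Fin D)) ∉ C j) with hAdef
  set B := Finset.univ.filter (fun s : Fin m → ↥P =>
      k' + 1 ≤ (Finset.univ.filter fun i : Fin m =>
        (s i : EuclideanSpace ℝ (Fin D)) ∉ Popt).card) with hBdef
  have hbad : Finset.univ \ G ⊆ (Finset.univ.biUnion A) ∪ B := by
    intro s hs
    rw [Finset.mem_sdiff, hGdef, Finset.mem_filter] at hs
    have hs' := hs.2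
    push_neg at hs'
    by_cases hA' : ∀ j, ∃ i, ((s i : EuclideanSpace ℝ (Fin D))) ∈ C j
    · have hgt := hs' hs.1 hA'
      refine Finset.mem_union_right _ ?_
      rw [hBdef, Finset.mem_filter]
      exact ⟨Finset.mem_univ _, by omega⟩
    · push_neg at hA'
      obtain ⟨j, hj⟩ := hA'
      refine Finset.mem_union_left _ ?_
      refine Finset.mem_biUnion.mpr ⟨j, Finset.mem_univ _, ?_⟩
      rw [hAdef]
      exact Finset.mem_filter.mpr ⟨Finset.mem_univ _, hj⟩
  -- cardinality of A j
  have hAcard : ∀ j, (A j).card = (n - (C j).card) ^ m := by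
    intro j
    have hTsub : C j ⊆ P := fun p hp => hPopt (hCsub j hp)
    have heq : A j = Fintype.piFinset (fun _ : Fin m =>
        Finset.univ.filter fun p : ↥P => (p : EuclideanSpace ℝ (Fin D)) ∉ C j) := by
      ext s
      rw [hAdef]
      simp [Fintype.mem_piFinset]
    rw [heq, Fintype.card_piFinset_const]
    congr 1
    rw [← hPcard]; convert aux_card_filter_coe_not P (C j) hTsub
  -- cardinality bound for B
  have hBcard : B.card * (k' + 1) ≤ m * z * n ^ (m - 1) := by
    have hmar := aux_markov (fun s : Fin m → ↥P =>
      (Finset.univ.filter fun i : Fin m =>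
        (s i : EuclideanSpace ℝ (Fin D)) ∉ Popt).card) (k' + 1)
    refine le_trans hmar (le_of_eq ?_)
    have hz' : (Finset.univ.filter fun p : ↥P =>
        (p : EuclideanSpace ℝ (Fin D)) ∉ Popt).card = z := by
      have := aux_card_filter_coe_not P Popt hPopt
      rw [hPcard, hPoptcard, Nat.sub_sub_self hzn.le] at this
      convert this
    calc ∑ s : Fin m → ↥P, (Finset.univ.filter fun i : Fin m =>
          (s i : EuclideanSpace ℝ (Fin D)) ∉ Popt).card
        = ∑ s : Fin m → ↥P, ∑ i : Fin m,
            (if (s i : EuclideanSpace ℝ (Fin D)) ∉ Popt then 1 else 0) := by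
          refine Finset.sum_congr rfl fun s _ => ?_
          rw [Finset.card_filter]
      _ = ∑ i : Fin m, ∑ s : Fin m → ↥P,
            (if (s i : EuclideanSpace ℝ (Fin D)) ∉ Popt then 1 else 0) :=
          Finset.sum_comm
      _ = ∑ _i : Fin m, z * n ^ (m - 1) := by
          refine Finset.sum_congr rfl fun i _ => ?_
          rw [aux_sum_coord i (fun p : ↥P =>
            if (p : EuclideanSpace ℝ (Fin D)) ∉ Popt then 1 else 0)]
          congr 1
          · rw [← hz', Finset.card_filter]
          · rw [Fintype.card_coe, hPcard]
      _ = m * z * n ^ (m - 1) := by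
          rw [Finset.sum_const, Finset.card_univ, Fintype.card_fin, smul_eq_mul]
          ring
  -- real bounds
  have hApow : ∀ j, ((A j).card : ℝ) ≤ (η / k) * (n : ℝ) ^ m := by
    intro j
    have hcj : (ε₁ / k) * n ≤ ((C j).card : ℝ) := hsig j
    have hcjn : (C j).card ≤ n := le_trans (Finset.card_le_card
      (fun p hp => hPopt (hCsub j hp))) (le_of_eq hPcard)
    have hc1 : (((n - (C j).card : ℕ)) : ℝ) = (n : ℝ) - ((C j).card : ℝ) := by
      push_cast [Nat.cast_sub hcjn]
      ring
    have hbase : ((n : ℝ) - ((C j).card : ℝ)) ≤ (1 - ε₁ / k) * n := by nlinarith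
    have hbase0 : (0 : ℝ) ≤ (n : ℝ) - ((C j).card : ℝ) := by
      have : ((C j).card : ℝ) ≤ n := by exact_mod_cast hcjn
      linarith
    have hpow1 : ((A j).card : ℝ) ≤ ((1 - ε₁ / k) * n) ^ m := by
      rw [hAcard j]
      push_cast [hc1]
      exact pow_le_pow_left₀ hbase0 hbase m
    have hexp : (1 - ε₁ / k) ^ m ≤ η / k := by
      have h1 : (1 - ε₁ / k) ≤ Real.exp (-(ε₁ / k)) := by
        have := Real.add_one_le_exp (-(ε₁ / k))
        linarith
      have h0 : (0 : ℝ) ≤ 1 - ε₁ / k := by linarith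
      have h2 : (1 - ε₁ / k) ^ m ≤ Real.exp (-(ε₁ / k)) ^ m :=
        pow_le_pow_left₀ h0 h1 m
      have h3 : Real.exp (-(ε₁ / k)) ^ m = Real.exp ((m : ℝ) * (-(ε₁ / k))) :=
        (Real.exp_nat_mul _ m).symm
      have h4 : (m : ℝ) * (-(ε₁ / k)) ≤ -(Real.log ((k : ℝ) / η)) := by
        have hd : (0 : ℝ) < ε₁ / k := div_pos hε₁ hkR
        have h5 : (ε₁ / k) * (((k : ℝ) / ε₁) * Real.log ((k : ℝ) / η))
            = Real.log ((k : ℝ) / η) := by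
          field_simp
        have h6 : (ε₁ / k) * (((k : ℝ) / ε₁) * Real.log ((k : ℝ) / η))
            ≤ (ε₁ / k) * m := mul_le_mul_of_nonneg_left hmlb (le_of_lt hd)
        rw [h5] at h6
        linarith
      have h7 : Real.exp (-(Real.log ((k : ℝ) / η))) = η / k := by
        rw [Real.exp_neg, Real.exp_log (div_pos hkR hη0), inv_div]
      calc (1 - ε₁ / k) ^ m ≤ Real.exp (-(ε₁ / k)) ^ m := h2
        _ = Real.exp ((m : ℝ) * (-(ε₁ / k))) := h3
        _ ≤ Real.exp (-(Real.log ((k : ℝ) / η))) := Real.exp_le_exp.mpr h4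
        _ = η / k := h7
    have hmulpow : ((1 - ε₁ / k) * (n : ℝ)) ^ m = (1 - ε₁ / k) ^ m * (n : ℝ) ^ m :=
      mul_pow _ _ _
    have hnn : (0 : ℝ) ≤ (n : ℝ) ^ m := by positivity
    have h8 := mul_le_mul_of_nonneg_right hexp hnn
    rw [hmulpow] at hpow1
    linarith
  have hAsum : ((Finset.univ.biUnion A).card : ℝ) ≤ η * (n : ℝ) ^ m := by
    have h1 : ((Finset.univ.biUnion A).card : ℝ) ≤ ∑ j : Fin k, ((A j).card : ℝ) := by
      have := Finset.card_biUnion_le (s := (Finset.univ : Finset (Fin k))) (t := A)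
      exact_mod_cast this
    refine h1.trans ?_
    calc ∑ j : Fin k, ((A j).card : ℝ) ≤ ∑ _j : Fin k, (η / k) * (n : ℝ) ^ m :=
        Finset.sum_le_sum fun j _ => hApow j
      _ = (k : ℝ) * ((η / k) * (n : ℝ) ^ m) := by
          rw [Finset.sum_const, Finset.card_univ, Fintype.card_fin, nsmul_eq_mul]
      _ = η * (n : ℝ) ^ m := by field_simp
  have hBreal : (B.card : ℝ) ≤ η * (n : ℝ) ^ m := by
    have h1 : (B.card : ℝ) * ((k' : ℝ) + 1) ≤ (m : ℝ) * z * (n : ℝ) ^ (m - 1) := by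
      exact_mod_cast hBcard
    have hceil : ε₂ / ((k : ℝ) * η) * m ≤ (k' : ℝ) := by
      rw [hk']; exact Nat.le_ceil _
    have hnm : (n : ℝ) ^ m = (n : ℝ) ^ (m - 1) * n := by
      rw [← pow_succ]
      congr 1
      omega
    have h2 : (m : ℝ) * z ≤ η * ((k' : ℝ) + 1) * n := by
      rw [hzval]
      have h3 : ε₂ * (m : ℝ) ≤ (k : ℝ) * η * (k' : ℝ) := by
        have := mul_le_mul_of_nonneg_left hceil (le_of_lt (mul_pos hkR hη0))
        have hne : (k : ℝ) * η ≠ 0 := ne_of_gt (mul_pos hkR hη0)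
        calc ε₂ * (m : ℝ) = (k : ℝ) * η * (ε₂ / ((k : ℝ) * η) * m) := by
              field_simp
          _ ≤ (k : ℝ) * η * (k' : ℝ) := this
      have hk'0 : (0 : ℝ) ≤ (k' : ℝ) := Nat.cast_nonneg _
      have h4 : ε₂ * (m : ℝ) / (k : ℝ) ≤ η * ((k' : ℝ) + 1) := by
        rw [div_le_iff₀ hkR]
        linarith [h3, (mul_pos hη0 hkR).le]
      calc (m : ℝ) * (ε₂ / (k : ℝ) * (n : ℝ)) = (ε₂ * (m : ℝ) / (k : ℝ)) * n := by
            ring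
        _ ≤ η * ((k' : ℝ) + 1) * n := mul_le_mul_of_nonneg_right h4 (le_of_lt hnR)
    have hpos : (0 : ℝ) < (k' : ℝ) + 1 := by positivity
    rw [← mul_le_mul_iff_of_pos_right hpos]
    calc (B.card : ℝ) * ((k' : ℝ) + 1) ≤ (m : ℝ) * z * (n : ℝ) ^ (m - 1) := h1
      _ ≤ (η * ((k' : ℝ) + 1) * n) * (n : ℝ) ^ (m - 1) := by
          have : (0 : ℝ) ≤ (n : ℝ) ^ (m - 1) := by positivity
          exact mul_le_mul_of_nonneg_right h2 this
      _ = η * (n : ℝ) ^ m * ((k' : ℝ) + 1) := by rw [hnm]; ring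
  -- combine
  have hGcard : ((n : ℝ) ^ m) * (1 - 2 * η) ≤ (G.card : ℝ) := by
    have h1 : (Finset.univ \ G).card + G.card = Fintype.card (Fin m → ↥P) := by
      rw [Finset.card_sdiff_add_card_eq_card (Finset.subset_univ G), Finset.card_univ]
    have h2 : ((Finset.univ \ G).card : ℝ) ≤ η * (n : ℝ) ^ m + η * (n : ℝ) ^ m := by
      have h3 : (Finset.univ \ G).card ≤ ((Finset.univ.biUnion A) ∪ B).card :=
        Finset.card_le_card hbad
      have h4 : ((Finset.univ.biUnion A) ∪ B).card
          ≤ (Finset.univ.biUnion A).card + B.card := Finset.card_union_le _ _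
      have h5 : ((Finset.univ \ G).card : ℝ)
          ≤ ((Finset.univ.biUnion A).card : ℝ) + (B.card : ℝ) := by
        exact_mod_cast le_trans h3 h4
      linarith
    rw [htotal] at h1
    have h6 : ((Finset.univ \ G).card : ℝ) + (G.card : ℝ) = (n : ℝ) ^ m := by
      exact_mod_cast h1
    linarith [h2, h6]
  -- finish
  rw [le_div_iff₀ htotR]
  have htotR' : ((Fintype.card (Fin m → ↥P)) : ℝ) = (n : ℝ) ^ m := by
    rw [htotal]; push_cast; ring
  rw [htotR']
  refine le_trans (b := (G.card : ℝ)) (by linarith only [hGcard]) ?_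
  refine Nat.cast_le.mpr (Finset.card_le_card fun s hs => ?_)
  simp only [Finset.mem_filter]
  rw [hGdef, Finset.mem_filter] at hs
  exact ⟨Finset.mem_univ s, step1 s hs.2.1 hs.2.2⟩
end

section
/- Let P ⊆ ℝ^D be finite, let P_opt ⊆ P be partitioned into nonempty clusters C*_1,…,C*_k, and suppose each C*_j is contained in some Euclidean ball of radius r_opt ≥ 0. Let S ⊆ P be finite, let z' be a natural number with |S ∩ C*_j| > z' for every j, let c ≥ 1, and suppose H ⊆ ℝ^D is a nonempty finite set for which there exist r ∈ [0, c·r_opt] and S' ⊆ S with |S'| = |S| − z' such that dist(q, H) ≤ r for every q ∈ S'. Then dist(p, H) ≤ (c+2)·r_opt for every p ∈ P_opt. -/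
open scoped Classical
open Finset

/-- If each optimal cluster is contained in a ball of radius `r_opt`, the sample
`S` contains more than `z'` points from every cluster, and `H` covers some subset
`S' ⊆ S` of size `|S| − z'` within radius `r ≤ c·r_opt`, then every point of `P_opt` is
within `(c+2)·r_opt` of `H`. -/
theorem kcenter_c_plus_two_approx_core {D : ℕ} (k : ℕ) (hk : 0 < k)
    (P Popt : Finset (EuclideanSpace ℝ (Fin D))) (hPopt : Popt ⊆ P)
    (C : Fin k → Finset (EuclideanSpace ℝ (Fin D)))
    (hCne : ∀ j, (C j).Nonempty)
    (hCsub : ∀ j, C j ⊆ Popt)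
    (hCdisj : ∀ j j', j ≠ j' → Disjoint (C j) (C j'))
    (hCcover : ∀ p ∈ Popt, ∃ j, p ∈ C j)
    (ropt : ℝ) (hropt : 0 ≤ ropt)
    (hball : ∀ j, ∃ x : EuclideanSpace ℝ (Fin D), ∀ p ∈ C j, dist p x ≤ ropt)
    (S : Finset (EuclideanSpace ℝ (Fin D))) (hS : S ⊆ P)
    (z' : ℕ) (hSC : ∀ j, z' < (S ∩ C j).card)
    (c : ℝ) (hc : 1 ≤ c)
    (H : Finset (EuclideanSpace ℝ (Fin D))) (hH : H.Nonempty)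
    (r : ℝ) (hr0 : 0 ≤ r) (hrc : r ≤ c * ropt)
    (S' : Finset (EuclideanSpace ℝ (Fin D))) (hS' : S' ⊆ S)
    (hS'card : S'.card = S.card - z')
    (hHS' : ∀ q ∈ S', Metric.infDist q (H : Set (EuclideanSpace ℝ (Fin D))) ≤ r) :
    ∀ p ∈ Popt, Metric.infDist p (H : Set (EuclideanSpace ℝ (Fin D))) ≤ (c + 2) * ropt := by

  intro p hp
  obtain ⟨j, hpj⟩ := hCcover p hp
  -- find q ∈ S' ∩ C j
  have hzS : z' ≤ S.card := le_of_lt ((hSC j).trans_le (card_le_card (inter_subset_left)))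
  have hne : ((S ∩ C j) ∩ S').Nonempty := by
    rw [← card_pos]
    have h1 : (S ∩ C j).card ≤ ((S ∩ C j) ∩ S').card + (S \ S').card := by
      have := card_le_card (s := S ∩ C j) (t := ((S ∩ C j) ∩ S') ∪ (S \ S'))
        (by intro x hx
            by_cases hx' : x ∈ S'
            · exact mem_union_left _ (mem_inter.mpr ⟨hx, hx'⟩)
            · exact mem_union_right _ (mem_sdiff.mpr ⟨(mem_inter.mp hx).1, hx'⟩))
      exact this.trans (card_union_le _ _)
    have h2 : (S \ S').card = z' := by
      rw [card_sdiff_of_subset hS', hS'card]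
      omega
    have := hSC j
    omega
  obtain ⟨q, hq⟩ := hne
  have hqS' : q ∈ S' := (mem_inter.mp hq).2
  have hqC : q ∈ C j := (mem_inter.mp (mem_inter.mp hq).1).2
  obtain ⟨x, hx⟩ := hball j
  have hpq : dist p q ≤ 2 * ropt := by
    calc dist p q ≤ dist p x + dist q x := dist_triangle_right _ _ _
    _ ≤ ropt + ropt := add_le_add (hx p hpj) (hx q hqC)
    _ = 2 * ropt := by ring
  have h3 : Metric.infDist p (H : Set (EuclideanSpace ℝ (Fin D))) ≤
      Metric.infDist q (H : Set (EuclideanSpace ℝ (Fin D))) + dist p q :=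
    Metric.infDist_le_infDist_add_dist
  calc Metric.infDist p (H : Set (EuclideanSpace ℝ (Fin D)))
      ≤ Metric.infDist q (H : Set (EuclideanSpace ℝ (Fin D))) + dist p q := h3
    _ ≤ r + 2 * ropt := add_le_add (hHS' q hqS') hpq
    _ ≤ c * ropt + 2 * ropt := by linarith
    _ = (c + 2) * ropt := by ring
end

section
/- Given an (ε₁,ε₂)-significant instance of k-center clustering with z outliers whose optimal clusters C*_1,…,C*_k are each contained in a Euclidean ball of radius r_opt, let η, δ ∈ (0,1) with ε₁/ε₂ > 1/(η(1−δ)), let m be a positive integer with m ≥ (3k/(δ²ε₁))·log(2k/η), and let z' be a natural number with (ε₂/(k·η))·m ≤ z' < (1−δ)·(ε₁/k)·m. Draw an i.i.d. uniform sample s : {1,…,m} → P. Then with probability at least 1 − 2η the following holds: for every c ≥ 1 and every nonempty finite H ⊆ ℝ^D with |H| = k satisfying min_{I⊆{1,…,m}, |I|=m−z'} max_{i∈I} dist(s_i, H) ≤ c · min{ min_{I⊆{1,…,m}, |I|=m−z'} max_{i∈I} dist(s_i, K) : K ⊆ ℝ^D, |K| = k } (i.e., H is a c-approximate solution of k-center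 clustering with z' outliers on the sample), one has Δ^{-z}_∞(P, H) ≤ (c+2)·r_opt. -/
open scoped Classical
open Finset

set_option maxRecDepth 8000
set_option maxHeartbeats 1000000

lemma sum_indicator_coord {α : Type*} [Fintype α] (p : α → Prop) [DecidablePred p]
    {m : ℕ} (i₀ : Fin m) :
    ∑ s : Fin m → α, (if p (s i₀) then (1:ℕ) else 0)
      = (univ.filter p).card * (Fintype.card α) ^ (m - 1) := by
  classical
  have h : ∀ s : Fin m → α, (if p (s i₀) then (1:ℕ) else 0)
      = ∏ i, (fun i (x : α) => if i = i₀ then (if p x then 1 else 0) else 1) i (s i) := by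
    intro s
    rw [Finset.prod_eq_single i₀ (fun b _ hb => by simp [hb]) (by simp)]
    simp
  have key := Fintype.prod_sum (κ := fun _ : Fin m => α)
    (f := fun i (x : α) => if i = i₀ then (if p x then (1:ℕ) else 0) else 1)
  rw [Finset.sum_congr rfl (fun s _ => h s), ← key]
  rw [← Finset.mul_prod_erase univ _ (mem_univ i₀)]
  have h1 : (∑ x : α, if i₀ = i₀ then (if p x then (1:ℕ) else 0) else 1)
      = (univ.filter p).card := by
    simp only [eq_self_iff_true, if_true]
    exact (Finset.card_filter _ _).symm
  have h2 : ∀ i ∈ univ.erase i₀,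
      (∑ x : α, if i = i₀ then (if p x then (1:ℕ) else 0) else 1) = Fintype.card α := by
    intro i hi
    simp only [if_neg (Finset.ne_of_mem_erase hi), Finset.sum_const, smul_eq_mul, mul_one,
      Finset.card_univ]
  rw [h1, Finset.prod_congr rfl h2, Finset.prod_const, Finset.card_erase_of_mem (mem_univ i₀),
    Finset.card_univ, Fintype.card_fin]

lemma markov_count {α : Type*} [Fintype α] (p : α → Prop) [DecidablePred p]
    {m : ℕ} (t : ℕ) :
    (univ.filter fun s : Fin m → α => t < (univ.filter fun i => p (s i)).card).card * (t + 1)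
      ≤ m * (univ.filter p).card * (Fintype.card α) ^ (m - 1) := by
  classical
  calc (univ.filter fun s : Fin m → α => t < (univ.filter fun i => p (s i)).card).card * (t+1)
      = ∑ s ∈ (univ.filter fun s : Fin m → α => t < (univ.filter fun i => p (s i)).card),
          (t + 1) := by rw [Finset.sum_const, smul_eq_mul]
    _ ≤ ∑ s ∈ (univ.filter fun s : Fin m → α => t < (univ.filter fun i => p (s i)).card),
          (univ.filter fun i => p (s i)).card := by
        apply Finset.sum_le_sum
        intro s hs
        exact Nat.succ_le_of_lt (Finset.mem_filter.1 hs).2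
    _ ≤ ∑ s : Fin m → α, (univ.filter fun i => p (s i)).card := by
        apply Finset.sum_le_sum_of_subset (Finset.filter_subset _ _)
    _ = ∑ s : Fin m → α, ∑ i : Fin m, (if p (s i) then 1 else 0) := by
        apply Finset.sum_congr rfl
        intro s _
        rw [Finset.card_filter]
    _ = ∑ i : Fin m, ∑ s : Fin m → α, (if p (s i) then 1 else 0) := Finset.sum_comm
    _ = ∑ _i : Fin m, (univ.filter p).card * (Fintype.card α) ^ (m - 1) := by
        apply Finset.sum_congr rfl
        intro i _
        exact sum_indicator_coord p i
    _ = m * (univ.filter p).card * (Fintype.card α) ^ (m - 1) := by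
        rw [Finset.sum_const, smul_eq_mul, Finset.card_univ, Fintype.card_fin, mul_assoc]

lemma chernoff_count {α : Type*} [Fintype α] (p : α → Prop) [DecidablePred p]
    {m : ℕ} (t : ℕ) (δ : ℝ) (hδ : 0 ≤ δ) :
    ((univ.filter fun s : Fin m → α => (univ.filter fun i => p (s i)).card ≤ t).card : ℝ)
      ≤ Real.exp (δ * t) *
        (((univ.filter p).card : ℝ) * Real.exp (-δ)
          + ((Fintype.card α : ℝ) - ((univ.filter p).card : ℝ))) ^ m := by
  classical
  set g : α → ℝ := fun x => if p x then Real.exp (-δ) else 1 with hg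
  have hgnn : ∀ x, 0 ≤ g x := by
    intro x
    by_cases hx : p x <;> simp [hg, hx, (Real.exp_pos _).le]
  have key1 : ∀ s : Fin m → α,
      ∏ i, g (s i) = Real.exp (-δ * ((univ.filter fun i => p (s i)).card : ℝ)) := by
    intro s
    have : ∀ i : Fin m, g (s i) = Real.exp (-δ * (if p (s i) then (1:ℝ) else 0)) := by
      intro i
      by_cases hx : p (s i) <;> simp [hg, hx]
    rw [Finset.prod_congr rfl (fun i _ => this i), ← Real.exp_sum, ← Finset.mul_sum]
    congr 1
    congr 1
    rw [Finset.card_filter]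
    push_cast
    rfl
  have key2 : ∀ s : Fin m → α, (univ.filter fun i => p (s i)).card ≤ t →
      (1:ℝ) ≤ Real.exp (δ * t) * ∏ i, g (s i) := by
    intro s hs
    rw [key1 s, ← Real.exp_add]
    rw [← Real.exp_zero]
    apply Real.exp_le_exp.2
    have : ((univ.filter fun i => p (s i)).card : ℝ) ≤ (t:ℝ) := by exact_mod_cast hs
    nlinarith
  have sum_g : ∑ x : α, g x = ((univ.filter p).card : ℝ) * Real.exp (-δ)
      + ((Fintype.card α : ℝ) - ((univ.filter p).card : ℝ)) := by
    rw [hg, Finset.sum_ite, Finset.sum_const, Finset.sum_const]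
    simp only [nsmul_eq_mul, mul_one]
    have hcc : (univ.filter p).card + (univ.filter (fun x => ¬ p x)).card = Fintype.card α := by
      rw [Finset.card_filter_add_card_filter_not, Finset.card_univ]
    have : ((univ.filter (fun x => ¬ p x)).card : ℝ)
        = (Fintype.card α : ℝ) - ((univ.filter p).card : ℝ) := by
      rw [← hcc]; push_cast; ring
    rw [this]
  have keyprod : ∑ s : Fin m → α, ∏ i, g (s i) = (∑ x : α, g x) ^ m := by
    have key := Fintype.prod_sum (κ := fun _ : Fin m => α) (f := fun _ (x : α) => g x)
    rw [← key, Finset.prod_const, Finset.card_univ, Fintype.card_fin]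
  calc ((univ.filter fun s : Fin m → α => (univ.filter fun i => p (s i)).card ≤ t).card : ℝ)
      = ∑ s ∈ (univ.filter fun s : Fin m → α => (univ.filter fun i => p (s i)).card ≤ t),
          (1:ℝ) := by rw [Finset.sum_const, nsmul_eq_mul, mul_one]
    _ ≤ ∑ s ∈ (univ.filter fun s : Fin m → α => (univ.filter fun i => p (s i)).card ≤ t),
          Real.exp (δ * t) * ∏ i, g (s i) := by
        apply Finset.sum_le_sum
        intro s hs
        exact key2 s (Finset.mem_filter.1 hs).2
    _ ≤ ∑ s : Fin m → α, Real.exp (δ * t) * ∏ i, g (s i) := by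
        apply Finset.sum_le_sum_of_subset_of_nonneg (Finset.filter_subset _ _)
        intro s _ _
        exact mul_nonneg (Real.exp_pos _).le (Finset.prod_nonneg fun i _ => hgnn _)
    _ = Real.exp (δ * t) * ∑ s : Fin m → α, ∏ i, g (s i) := by rw [← Finset.mul_sum]
    _ = Real.exp (δ * t) * (∑ x : α, g x) ^ m := by rw [keyprod]
    _ = _ := by rw [sum_g]

lemma exp_neg_le_quad {x : ℝ} (hx : 0 ≤ x) : Real.exp (-x) ≤ 1 - x + x ^ 2 / 2 := by
  have h := Real.quadratic_le_exp_of_nonneg hx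
  have hmul : Real.exp (-x) * Real.exp x = 1 := by
    rw [← Real.exp_add]; simp
  have hpos := Real.exp_pos x
  have hpos' := Real.exp_pos (-x)
  nlinarith [sq_nonneg (x ^ 2), sq_nonneg x, mul_le_mul_of_nonneg_left h hpos'.le]

lemma markov_bound {α : Type*} [Fintype α] (p : α → Prop) [DecidablePred p]
    {m : ℕ} (hm : 0 < m) {t : ℕ} (ht : 0 < t) {η : ℝ}
    (hN : 0 < Fintype.card α)
    (hkey : (m : ℝ) * ((univ.filter p).card : ℝ) ≤ η * (Fintype.card α : ℝ) * t) :
    ((univ.filter fun s : Fin m → α => t < (univ.filter fun i => p (s i)).card).card : ℝ)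
      ≤ η * (Fintype.card α : ℝ) ^ m := by
  classical
  have hmar := markov_count (p := p) (m := m) t
  set a : ℝ := ((univ.filter fun s : Fin m → α =>
    t < (univ.filter fun i => p (s i)).card).card : ℝ) with hadef
  have hmar' : a * ((t : ℝ) + 1)
      ≤ (m : ℝ) * ((univ.filter p).card : ℝ) * (Fintype.card α : ℝ) ^ (m - 1) := by
    rw [hadef]
    exact_mod_cast hmar
  have hN' : (0:ℝ) < (Fintype.card α : ℝ) := by exact_mod_cast hN
  have ht' : (0:ℝ) < (t : ℝ) := by exact_mod_cast ht
  have hpow1 : (Fintype.card α : ℝ) ^ (m - 1) * (Fintype.card α : ℝ)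
      = (Fintype.card α : ℝ) ^ m := by
    rw [← pow_succ, Nat.sub_add_cancel hm]
  have hpnn : (0:ℝ) ≤ (Fintype.card α : ℝ) ^ (m - 1) := by positivity
  have ha0 : (0:ℝ) ≤ a := by rw [hadef]; exact Nat.cast_nonneg _
  have hfin : a * t ≤ η * (Fintype.card α : ℝ) ^ m * t := by
    calc a * t ≤ a * ((t:ℝ) + 1) := by linarith
      _ ≤ (m : ℝ) * ((univ.filter p).card : ℝ) * (Fintype.card α : ℝ) ^ (m - 1) := hmar'
      _ ≤ η * (Fintype.card α : ℝ) * t * (Fintype.card α : ℝ) ^ (m - 1) :=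
          mul_le_mul_of_nonneg_right hkey hpnn
      _ = η * (Fintype.card α : ℝ) ^ m * t := by rw [← hpow1]; ring
  exact le_of_mul_le_mul_right hfin ht'

lemma chernoff_bound {α : Type*} [Fintype α] (p : α → Prop) [DecidablePred p]
    {m : ℕ} {t : ℕ} {δ ε ρ : ℝ} (hδ0 : 0 < δ) (hδ1 : δ < 1) (hε : 0 < ε)
    (hN : 0 < Fintype.card α)
    (hq : ε ≤ ((univ.filter p).card : ℝ) / (Fintype.card α : ℝ))
    (htb : (t : ℝ) ≤ (1 - δ) * ε * m)
    (hρ : 0 < ρ)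
    (hlog : Real.exp (-(ε * δ ^ 2 * m / 2)) ≤ ρ) :
    ((univ.filter fun s : Fin m → α => (univ.filter fun i => p (s i)).card ≤ t).card : ℝ)
      ≤ ρ * (Fintype.card α : ℝ) ^ m := by
  classical
  have hch := chernoff_count (p := p) (m := m) t δ hδ0.le
  set c : ℝ := ((univ.filter p).card : ℝ) with hcdef
  set N : ℝ := (Fintype.card α : ℝ) with hNdef
  have hN' : (0:ℝ) < N := by rw [hNdef]; exact_mod_cast hN
  have hcN : c ≤ N := by
    rw [hcdef, hNdef]
    exact_mod_cast (Finset.card_filter_le _ _)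
  have hc0 : (0:ℝ) ≤ c := by rw [hcdef]; exact Nat.cast_nonneg _
  set q : ℝ := c / N with hq'
  have hq1 : q ≤ 1 := by rw [hq', div_le_one hN']; exact hcN
  have hql : ε ≤ q := hq
  have hq0 : 0 < q := lt_of_lt_of_le hε hql
  have hE1 : Real.exp (-δ) ≤ 1 := by
    rw [← Real.exp_zero]
    exact Real.exp_le_exp.2 (by linarith)
  have hE0 : 0 < Real.exp (-δ) := Real.exp_pos _
  have hbase : c * Real.exp (-δ) + (N - c) = N * (1 - q * (1 - Real.exp (-δ))) := by
    rw [hq']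
    field_simp
    ring
  have hbnn : 0 ≤ 1 - q * (1 - Real.exp (-δ)) := by nlinarith
  have hble : 1 - q * (1 - Real.exp (-δ)) ≤ Real.exp (-(q * (1 - Real.exp (-δ)))) := by
    have := Real.add_one_le_exp (-(q * (1 - Real.exp (-δ))))
    linarith
  have hstep : (c * Real.exp (-δ) + (N - c)) ^ m
      ≤ N ^ m * Real.exp (-(q * (1 - Real.exp (-δ))) * m) := by
    rw [hbase, mul_pow]
    apply mul_le_mul_of_nonneg_left _ (by positivity)
    calc (1 - q * (1 - Real.exp (-δ))) ^ m
        ≤ (Real.exp (-(q * (1 - Real.exp (-δ))))) ^ m := pow_le_pow_left₀ hbnn hble m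
      _ = Real.exp (-(q * (1 - Real.exp (-δ))) * m) := by
          rw [mul_comm (-(q * (1 - Real.exp (-δ)))) (m:ℝ), Real.exp_nat_mul]
  have hquad : Real.exp (-δ) ≤ 1 - δ + δ ^ 2 / 2 := exp_neg_le_quad hδ0.le
  have hmnn : (0:ℝ) ≤ (m:ℝ) := Nat.cast_nonneg _
  have hexparg : δ * t + (-(q * (1 - Real.exp (-δ))) * m) ≤ -(ε * δ ^ 2 * m / 2) := by
    have h1 : δ * (t:ℝ) ≤ δ * ((1 - δ) * ε * m) := mul_le_mul_of_nonneg_left htb hδ0.le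
    have h2 : δ * ((1 - δ) * ε * m) ≤ δ * ((1 - δ) * q * m) := by
      apply mul_le_mul_of_nonneg_left _ hδ0.le
      have h0 : (0:ℝ) ≤ (1 - δ) * m := by nlinarith
      nlinarith
    have h3 : q * (δ - δ ^ 2 / 2) * m ≤ q * (1 - Real.exp (-δ)) * m := by
      have hx : δ - δ ^ 2 / 2 ≤ 1 - Real.exp (-δ) := by linarith
      have := mul_le_mul_of_nonneg_left hx hq0.le
      exact mul_le_mul_of_nonneg_right this hmnn
    have h4 : δ * ((1 - δ) * q * m) - q * (δ - δ ^ 2 / 2) * m = -(q * m * δ ^ 2 / 2) := by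
      ring
    have h5 : ε * δ ^ 2 * m / 2 ≤ q * m * δ ^ 2 / 2 := by nlinarith
    linarith
  have hfinal : Real.exp (δ * t) * (c * Real.exp (-δ) + (N - c)) ^ m ≤ ρ * N ^ m := by
    calc Real.exp (δ * t) * (c * Real.exp (-δ) + (N - c)) ^ m
        ≤ Real.exp (δ * t) * (N ^ m * Real.exp (-(q * (1 - Real.exp (-δ))) * m)) :=
          mul_le_mul_of_nonneg_left hstep (Real.exp_pos _).le
      _ = N ^ m * Real.exp (δ * t + (-(q * (1 - Real.exp (-δ))) * m)) := by
          rw [Real.exp_add]; ring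
      _ ≤ N ^ m * Real.exp (-(ε * δ ^ 2 * m / 2)) := by
          apply mul_le_mul_of_nonneg_left (Real.exp_le_exp.2 hexparg) (by positivity)
      _ ≤ N ^ m * ρ := mul_le_mul_of_nonneg_left hlog (by positivity)
      _ = ρ * N ^ m := by ring
  exact le_trans hch hfinal


/-- The optimal `(m − z')`-point covering radius of the sample `s` with respect to the center
set `T`: the minimum over all index sets `I` of size `m − z'` of the maximum distance from a
sample point indexed by `I` to `T`. -/
noncomputable def outlierRadius {D : ℕ} (m z' : ℕ) (s : Fin m → EuclideanSpace ℝ (Fin D))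
    (T : Finset (EuclideanSpace ℝ (Fin D))) : ℝ :=
  sInf { r : ℝ | ∃ I : Finset (Fin m), I.card = m - z' ∧
    r = ⨆ i : ↥I, Metric.infDist (s i.1) (T : Set (EuclideanSpace ℝ (Fin D))) }

lemma outlierRadius_exists_eq {D : ℕ} (m z' : ℕ) (s : Fin m → EuclideanSpace ℝ (Fin D))
    (T : Finset (EuclideanSpace ℝ (Fin D))) :
    ∃ I : Finset (Fin m), I.card = m - z' ∧
      outlierRadius m z' s T
        = ⨆ i : ↥I, Metric.infDist (s i.1) (T : Set (EuclideanSpace ℝ (Fin D))) := by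
  classical
  set S := { r : ℝ | ∃ I : Finset (Fin m), I.card = m - z' ∧
    r = ⨆ i : ↥I, Metric.infDist (s i.1) (T : Set (EuclideanSpace ℝ (Fin D))) } with hSdef
  have hS : S = (fun I : Finset (Fin m) =>
      ⨆ i : ↥I, Metric.infDist (s i.1) (T : Set (EuclideanSpace ℝ (Fin D)))) ''
      {I : Finset (Fin m) | I.card = m - z'} := by
    ext r
    constructor
    · rintro ⟨I, hI, rfl⟩; exact ⟨I, hI, rfl⟩
    · rintro ⟨I, hI, rfl⟩; exact ⟨I, hI, rfl⟩
  have hfin : S.Finite := by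
    rw [hS]; exact (Set.toFinite _).image _
  have hne : S.Nonempty := by
    obtain ⟨I, _, hI⟩ := Finset.exists_subset_card_eq
      (s := (univ : Finset (Fin m))) (n := m - z')
      (by rw [Finset.card_univ, Fintype.card_fin]; exact Nat.sub_le _ _)
    exact ⟨_, ⟨I, hI, rfl⟩⟩
  have := hne.csInf_mem hfin
  exact this

lemma outlierRadius_le {D : ℕ} (m z' : ℕ) (s : Fin m → EuclideanSpace ℝ (Fin D))
    (T : Finset (EuclideanSpace ℝ (Fin D))) {r : ℝ} (hr : 0 ≤ r)
    (I : Finset (Fin m)) (hI : I.card = m - z')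
    (h : ∀ i ∈ I, Metric.infDist (s i) (T : Set (EuclideanSpace ℝ (Fin D))) ≤ r) :
    outlierRadius m z' s T ≤ r := by
  have hbdd : BddBelow { r : ℝ | ∃ I : Finset (Fin m), I.card = m - z' ∧
      r = ⨆ i : ↥I, Metric.infDist (s i.1) (T : Set (EuclideanSpace ℝ (Fin D))) } := by
    refine ⟨0, ?_⟩
    rintro x ⟨J, _, rfl⟩
    exact Real.iSup_nonneg fun i => Metric.infDist_nonneg
  have hmem : (⨆ i : ↥I, Metric.infDist (s i.1) (T : Set (EuclideanSpace ℝ (Fin D))))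
      ∈ { r : ℝ | ∃ I : Finset (Fin m), I.card = m - z' ∧
      r = ⨆ i : ↥I, Metric.infDist (s i.1) (T : Set (EuclideanSpace ℝ (Fin D))) } :=
    ⟨I, hI, rfl⟩
  exact le_trans (csInf_le hbdd hmem) (Real.iSup_le (fun i => h i.1 i.2) hr)

lemma exists_mem_dist_le {α : Type*} [MetricSpace α] (H : Finset α) (hH : H.Nonempty)
    (x : α) {r : ℝ} (h : Metric.infDist x (H : Set α) ≤ r) : ∃ y ∈ H, dist x y ≤ r := by
  obtain ⟨y, hy, hmin⟩ := H.exists_min_image (fun y => dist x y) hH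
  refine ⟨y, hy, ?_⟩
  by_contra hlt
  push_neg at hlt
  have hlt2 : Metric.infDist x (H : Set α) < dist x y := lt_of_le_of_lt h hlt
  obtain ⟨y', hy', hd⟩ := (Metric.infDist_lt_iff ⟨y, by simpa using hy⟩).1 hlt2
  exact absurd hd (not_lt.2 (hmin y' (by simpa using hy')))

lemma good_of_counts {D k : ℕ} (hk : 0 < k)
    (P Popt : Finset (EuclideanSpace ℝ (Fin D))) (hPopt : Popt ⊆ P)
    (C : Fin k → Finset (EuclideanSpace ℝ (Fin D)))
    (hCcover : ∀ p ∈ Popt, ∃ j, p ∈ C j)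
    (ropt : ℝ) (hropt : 0 ≤ ropt)
    (hball : ∀ j, ∃ x : EuclideanSpace ℝ (Fin D), ∀ p ∈ C j, dist p x ≤ ropt)
    (m z' : ℕ) (hz'm : z' ≤ m)
    (s : Fin m → ↥P)
    (hA : (univ.filter fun i => ¬ ((s i : EuclideanSpace ℝ (Fin D)) ∈ Popt)).card ≤ z')
    (hB : ∀ j, z' < (univ.filter fun i => (s i : EuclideanSpace ℝ (Fin D)) ∈ C j).card) :
    ∀ c : ℝ, 1 ≤ c →
      ∀ H : Finset (EuclideanSpace ℝ (Fin D)), H.Nonempty → H.card = k →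
        (∀ K : Finset (EuclideanSpace ℝ (Fin D)), K.Nonempty → K.card = k →
          outlierRadius m z' (fun i => (s i : EuclideanSpace ℝ (Fin D))) H ≤
            c * outlierRadius m z' (fun i => (s i : EuclideanSpace ℝ (Fin D))) K) →
        ∃ P' ⊆ P, P'.card = Popt.card ∧
          ∀ p ∈ P', Metric.infDist p (H : Set (EuclideanSpace ℝ (Fin D))) ≤
            (c + 2) * ropt := by
  classical
  intro c hc H hHne hHcard happrox
  choose x hx using hball
  set X : Finset (EuclideanSpace ℝ (Fin D)) := Finset.image x univ with hXdef
  have hXcard : X.card ≤ k := le_trans Finset.card_image_le (by simp)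
  obtain ⟨K, hXK, _, hKcard⟩ := Finset.exists_subsuperset_card_eq
    (Finset.subset_union_left (s₂ := H)) hXcard
    (le_trans (le_of_eq hHcard.symm) (Finset.card_le_card Finset.subset_union_right))
  have hKne : K.Nonempty := by rw [← Finset.card_pos, hKcard]; exact hk
  set I₀ := univ.filter (fun i => (s i : EuclideanSpace ℝ (Fin D)) ∈ Popt) with hI₀def
  have hI₀card : m - z' ≤ I₀.card := by
    have := Finset.card_filter_add_card_filter_not
      (s := (univ : Finset (Fin m)))
      (p := fun i => (s i : EuclideanSpace ℝ (Fin D)) ∈ Popt)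
    rw [Finset.card_univ, Fintype.card_fin] at this
    rw [hI₀def]
    omega
  obtain ⟨I, hIsub, hIcard⟩ := Finset.exists_subset_card_eq hI₀card
  have hRK : outlierRadius m z' (fun i => (s i : EuclideanSpace ℝ (Fin D))) K ≤ ropt := by
    apply outlierRadius_le m z' _ K hropt I hIcard
    intro i hi
    have hmem : (s i : EuclideanSpace ℝ (Fin D)) ∈ Popt := by
      have := hIsub hi
      rw [hI₀def, Finset.mem_filter] at this
      exact this.2
    obtain ⟨j, hj⟩ := hCcover _ hmem
    have hxK : x j ∈ K := hXK (Finset.mem_image.2 ⟨j, Finset.mem_univ j, rfl⟩)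
    exact le_trans (Metric.infDist_le_dist_of_mem (by simpa using hxK)) (hx j _ hj)
  have hRH : outlierRadius m z' (fun i => (s i : EuclideanSpace ℝ (Fin D))) H ≤ c * ropt :=
    le_trans (happrox K hKne hKcard)
      (mul_le_mul_of_nonneg_left hRK (le_trans zero_le_one hc))
  obtain ⟨J, hJcard, hJeq⟩ := outlierRadius_exists_eq m z'
    (fun i => (s i : EuclideanSpace ℝ (Fin D))) H
  have hsup : ∀ i : ↥J, Metric.infDist ((s i.1 : EuclideanSpace ℝ (Fin D)))
      (H : Set (EuclideanSpace ℝ (Fin D))) ≤ c * ropt := by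
    intro i
    refine le_trans (le_ciSup (f := fun i : ↥J => Metric.infDist
      ((s i.1 : EuclideanSpace ℝ (Fin D))) (H : Set (EuclideanSpace ℝ (Fin D))))
      (Set.Finite.bddAbove (Set.finite_range _)) i) (le_trans (le_of_eq hJeq.symm) hRH)
  refine ⟨Popt, hPopt, rfl, ?_⟩
  intro p hp
  obtain ⟨j, hpj⟩ := hCcover p hp
  have hint : ((univ.filter fun i => (s i : EuclideanSpace ℝ (Fin D)) ∈ C j) ∩ J).Nonempty := by
    rw [← Finset.card_pos]
    by_contra hempty
    push_neg at hempty
    have hdisj : Disjoint (univ.filter fun i => (s i : EuclideanSpace ℝ (Fin D)) ∈ C j) J := by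
      rw [Finset.disjoint_iff_inter_eq_empty, ← Finset.card_eq_zero]
      omega
    have hsub2 : (univ.filter fun i => (s i : EuclideanSpace ℝ (Fin D)) ∈ C j)
        ⊆ univ \ J := by
      intro i hi
      rw [Finset.mem_sdiff]
      exact ⟨Finset.mem_univ i, Finset.disjoint_left.1 hdisj hi⟩
    have hcard := Finset.card_le_card hsub2
    rw [Finset.card_sdiff_of_subset (Finset.subset_univ J), Finset.card_univ, Fintype.card_fin,
      hJcard] at hcard
    have := hB j
    omega
  obtain ⟨i, hi⟩ := hint
  rw [Finset.mem_inter, Finset.mem_filter] at hi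
  have h1 := hsup ⟨i, hi.2⟩
  obtain ⟨h, hhH, hdist⟩ := exists_mem_dist_le H hHne _ h1
  have h2 : Metric.infDist p (H : Set (EuclideanSpace ℝ (Fin D))) ≤ dist p h :=
    Metric.infDist_le_dist_of_mem (by simpa using hhH)
  have h3 : dist p h ≤ dist p (x j) + dist (x j) ((s i : EuclideanSpace ℝ (Fin D)))
      + dist ((s i : EuclideanSpace ℝ (Fin D))) h := dist_triangle4 _ _ _ _
  have h4 : dist p (x j) ≤ ropt := hx j p hpj
  have h5 : dist (x j) ((s i : EuclideanSpace ℝ (Fin D))) ≤ ropt := by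
    rw [dist_comm]; exact hx j _ hi.1.2
  nlinarith

lemma card_filter_subtype {α : Type*} [DecidableEq α] (P : Finset α) (pred : α → Prop)
    [DecidablePred pred] :
    ((univ : Finset ↥P).filter fun x : ↥P => pred ↑x).card = (P.filter pred).card := by
  classical
  apply Finset.card_bij (fun (x : ↥P) _ => (x : α))
  · intro a ha
    rw [Finset.mem_filter]
    exact ⟨a.2, (Finset.mem_filter.1 ha).2⟩
  · intro a _ b _ h
    exact Subtype.ext h
  · intro b hb
    refine ⟨⟨b, (Finset.mem_filter.1 hb).1⟩, ?_, rfl⟩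
    rw [Finset.mem_filter]
    exact ⟨Finset.mem_univ _, (Finset.mem_filter.1 hb).2⟩

/-- Uniform sampling for k-center clustering with outliers (Algorithm II /
Theorem 2). For an `(ε₁,ε₂)`-significant instance with `ε₁/ε₂ > 1/(η(1−δ))`, sample size
`m ≥ (3k/(δ²ε₁))·log(2k/η)` and `(ε₂/(kη))·m ≤ z' < (1−δ)·(ε₁/k)·m`: with probability at
least `1 − 2η`, every `c`-approximate solution `H` (with `|H| = k`) of k-center clustering
with `z'` outliers on the sample satisfies `Δ^{-z}_∞(P,H) ≤ (c+2)·r_opt`. -/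
theorem uniform_sampling_kcenter_outliers_II {D : ℕ} (k n z : ℕ) (hk : 0 < k)
    (hz0 : 0 < z) (hzn : z < n)
    (P Popt : Finset (EuclideanSpace ℝ (Fin D)))
    (hPcard : P.card = n) (hPopt : Popt ⊆ P) (hPoptcard : Popt.card = n - z)
    (C : Fin k → Finset (EuclideanSpace ℝ (Fin D)))
    (hCne : ∀ j, (C j).Nonempty)
    (hCsub : ∀ j, C j ⊆ Popt)
    (hCdisj : ∀ j j', j ≠ j' → Disjoint (C j) (C j'))
    (hCcover : ∀ p ∈ Popt, ∃ j, p ∈ C j)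
    (ropt : ℝ) (hropt : 0 ≤ ropt)
    (hball : ∀ j, ∃ x : EuclideanSpace ℝ (Fin D), ∀ p ∈ C j, dist p x ≤ ropt)
    (ε₁ ε₂ : ℝ) (hε₁ : 0 < ε₁) (hε₂ : 0 < ε₂)
    (hsig : ∀ j, (ε₁ / k) * n ≤ ((C j).card : ℝ))
    (hzval : (z : ℝ) = (ε₂ / k) * n)
    (η δ : ℝ) (hη0 : 0 < η) (hη1 : η < 1) (hδ0 : 0 < δ) (hδ1 : δ < 1)
    (hratio : 1 / (η * (1 - δ)) < ε₁ / ε₂)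
    (m : ℕ) (hm : 0 < m)
    (hmlb : ((3 * k : ℝ) / (δ ^ 2 * ε₁)) * Real.log (2 * k / η) ≤ (m : ℝ))
    (z' : ℕ) (hz'lb : ε₂ / (k * η) * m ≤ (z' : ℝ))
    (hz'ub : (z' : ℝ) < (1 - δ) * (ε₁ / k) * m) :
    1 - 2 * η ≤
      ((Finset.univ.filter fun s : Fin m → ↥P =>
          ∀ c : ℝ, 1 ≤ c →
            ∀ H : Finset (EuclideanSpace ℝ (Fin D)), H.Nonempty → H.card = k →
              (∀ K : Finset (EuclideanSpace ℝ (Fin D)), K.Nonempty → K.card = k →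
                outlierRadius m z' (fun i => (s i : EuclideanSpace ℝ (Fin D))) H ≤
                  c * outlierRadius m z' (fun i => (s i : EuclideanSpace ℝ (Fin D))) K) →
              ∃ P' ⊆ P, P'.card = n - z ∧
                ∀ p ∈ P', Metric.infDist p (H : Set (EuclideanSpace ℝ (Fin D))) ≤
                  (c + 2) * ropt).card : ℝ)
        / (Fintype.card (Fin m → ↥P) : ℝ) := by
  classical
  have hn : 0 < n := lt_of_le_of_lt (Nat.zero_le z) hzn
  have hn' : (0:ℝ) < n := by exact_mod_cast hn
  have hk' : (1:ℝ) ≤ k := by exact_mod_cast hk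
  have hk0 : (0:ℝ) < k := by linarith
  have hm' : (0:ℝ) < m := by exact_mod_cast hm
  have hcardfun : Fintype.card (Fin m → ↥P) = n ^ m := by
    rw [Fintype.card_fun, Fintype.card_coe, Fintype.card_fin, hPcard]
  have hpow : (0:ℝ) < (n:ℝ) ^ m := pow_pos hn' m
  have hcA : ((univ : Finset ↥P).filter
      fun x : ↥P => ¬((x : EuclideanSpace ℝ (Fin D)) ∈ Popt)).card = z := by
    rw [card_filter_subtype P (fun y => ¬(y ∈ Popt)),
      ← Finset.sdiff_eq_filter, Finset.card_sdiff_of_subset hPopt, hPcard, hPoptcard]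
    omega
  have hCsubP : ∀ j, C j ⊆ P := fun j => (hCsub j).trans hPopt
  have hcC : ∀ j, ((univ : Finset ↥P).filter
      fun x : ↥P => (x : EuclideanSpace ℝ (Fin D)) ∈ C j).card = (C j).card := by
    intro j
    rw [card_filter_subtype P (fun y => y ∈ C j),
      Finset.filter_mem_eq_inter, Finset.inter_eq_right.2 (hCsubP j)]
  have hsig0 := hsig ⟨0, hk⟩
  have hC0le : ((C ⟨0, hk⟩).card : ℝ) ≤ (n:ℝ) - z := by
    have h1 : (C ⟨0, hk⟩).card ≤ Popt.card := Finset.card_le_card (hCsub _)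
    rw [hPoptcard] at h1
    have h2 : ((n - z : ℕ) : ℝ) = (n:ℝ) - z := by
      push_cast [Nat.cast_sub hzn.le]
      ring
    rw [← h2]
    exact_mod_cast h1
  have hzr : (0:ℝ) < z := by exact_mod_cast hz0
  have hek : ε₁ / k < 1 := by
    have h : (ε₁ / k) * n < 1 * n := by
      calc (ε₁ / k) * n ≤ ((C ⟨0, hk⟩).card : ℝ) := hsig0
        _ ≤ (n:ℝ) - z := hC0le
        _ < 1 * n := by linarith
    exact lt_of_mul_lt_mul_right h hn'.le
  have hekpos : 0 < ε₁ / k := div_pos hε₁ hk0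
  have hz'm : z' ≤ m := by
    have h1 : (1 - δ) * (ε₁ / k) < 1 := by nlinarith
    have h2 : (1 - δ) * (ε₁ / k) * m < 1 * m := mul_lt_mul_of_pos_right h1 hm'
    have h3 : (z' : ℝ) < (m : ℝ) := by linarith
    exact (by exact_mod_cast h3 : z' < m).le
  have hz'pos : 0 < z' := by
    have : (0:ℝ) < (z' : ℝ) := lt_of_lt_of_le (by positivity) hz'lb
    exact_mod_cast this
  have hNpos : 0 < Fintype.card ↥P := by rw [Fintype.card_coe, hPcard]; exact hn
  -- Markov bound
  have hkeyA : (m:ℝ) * (((univ : Finset ↥P).filter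
      fun x : ↥P => ¬((x : EuclideanSpace ℝ (Fin D)) ∈ Popt)).card : ℝ)
      ≤ η * (Fintype.card ↥P : ℝ) * z' := by
    rw [hcA, Fintype.card_coe, hPcard]
    have h1 : η * (n:ℝ) * (ε₂ / (k * η) * m) ≤ η * n * z' :=
      mul_le_mul_of_nonneg_left hz'lb (by positivity)
    have h2 : η * (n:ℝ) * (ε₂ / (k * η) * m) = (m:ℝ) * z := by
      rw [hzval]
      field_simp
    linarith
  have hAcard := markov_bound (p := fun x : ↥P => ¬((x : EuclideanSpace ℝ (Fin D)) ∈ Popt))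
    hm hz'pos hNpos hkeyA
  rw [Fintype.card_coe, hPcard] at hAcard
  have h2kpos : (0:ℝ) < 2 * k / η := by positivity
  have hL0 : 0 ≤ Real.log (2 * k / η) := by
    apply Real.log_nonneg
    rw [le_div_iff₀ hη0]
    nlinarith
  have hexpL : Real.exp (-Real.log (2 * k / η)) = η / (2 * k) := by
    rw [Real.exp_neg, Real.exp_log h2kpos, inv_div]
  -- Chernoff bound per cluster
  have hBcard : ∀ j : Fin k, ((univ.filter fun s : Fin m → ↥P =>
      (univ.filter fun i => (s i : EuclideanSpace ℝ (Fin D)) ∈ C j).card ≤ z').card : ℝ)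
      ≤ η / (2 * k) * (n:ℝ) ^ m := by
    intro j
    have hqj : ε₁ / k ≤ (((univ : Finset ↥P).filter
        fun x : ↥P => (x : EuclideanSpace ℝ (Fin D)) ∈ C j).card : ℝ)
        / (Fintype.card ↥P : ℝ) := by
      rw [hcC j, Fintype.card_coe, hPcard, le_div_iff₀ hn']
      exact hsig j
    have hρ : (0:ℝ) < η / (2 * k) := by positivity
    have hlogj : Real.exp (-(ε₁ / k * δ ^ 2 * m / 2)) ≤ η / (2 * k) := by
      rw [← hexpL]
      apply Real.exp_le_exp.2
      have hc2 : ε₁ / k * δ ^ 2 / 2 * ((3 * (k:ℝ)) / (δ ^ 2 * ε₁) * Real.log (2 * k / η))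
          = 3 / 2 * Real.log (2 * k / η) := by
        field_simp
      have hc3 : ε₁ / k * δ ^ 2 / 2 * ((3 * (k:ℝ)) / (δ ^ 2 * ε₁) * Real.log (2 * k / η))
          ≤ ε₁ / k * δ ^ 2 / 2 * m :=
        mul_le_mul_of_nonneg_left hmlb (by positivity)
      linarith
    have hb := chernoff_bound (p := fun x : ↥P => (x : EuclideanSpace ℝ (Fin D)) ∈ C j)
      hδ0 hδ1 hekpos hNpos hqj hz'ub.le hρ hlogj
    rw [Fintype.card_coe, hPcard] at hb
    exact hb
  -- the good event
  set GoodPred : (Fin m → ↥P) → Prop := fun s : Fin m → ↥P =>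
    ∀ c : ℝ, 1 ≤ c →
      ∀ H : Finset (EuclideanSpace ℝ (Fin D)), H.Nonempty → H.card = k →
        (∀ K : Finset (EuclideanSpace ℝ (Fin D)), K.Nonempty → K.card = k →
          outlierRadius m z' (fun i => (s i : EuclideanSpace ℝ (Fin D))) H ≤
            c * outlierRadius m z' (fun i => (s i : EuclideanSpace ℝ (Fin D))) K) →
        ∃ P' ⊆ P, P'.card = n - z ∧
          ∀ p ∈ P', Metric.infDist p (H : Set (EuclideanSpace ℝ (Fin D))) ≤
            (c + 2) * ropt with hGP
  have hsubset : (univ.filter fun s : Fin m → ↥P => ¬ GoodPred s)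
      ⊆ (univ.filter fun s : Fin m → ↥P => z' <
          (univ.filter fun i => ¬((s i : EuclideanSpace ℝ (Fin D)) ∈ Popt)).card)
        ∪ univ.biUnion (fun j : Fin k => univ.filter fun s : Fin m → ↥P =>
          (univ.filter fun i => (s i : EuclideanSpace ℝ (Fin D)) ∈ C j).card ≤ z') := by
    intro s hs
    rw [Finset.mem_filter] at hs
    by_contra hnot
    rw [Finset.mem_union, Finset.mem_biUnion] at hnot
    push_neg at hnot
    obtain ⟨hnA, hnB⟩ := hnot
    rw [Finset.mem_filter] at hnA
    push_neg at hnA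
    have hA' : (univ.filter fun i => ¬((s i : EuclideanSpace ℝ (Fin D)) ∈ Popt)).card ≤ z' :=
      hnA (Finset.mem_univ s)
    have hB' : ∀ j, z' < (univ.filter fun i => (s i : EuclideanSpace ℝ (Fin D)) ∈ C j).card := by
      intro j
      have hj := hnB j (Finset.mem_univ j)
      rw [Finset.mem_filter] at hj
      push_neg at hj
      exact hj (Finset.mem_univ s)
    apply hs.2
    intro c hc H hHne hHcard happrox
    obtain ⟨P', hP'sub, hP'card, hP'dist⟩ :=
      good_of_counts hk P Popt hPopt C hCcover ropt hropt hball m z' hz'm s hA' hB'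
        c hc H hHne hHcard happrox
    exact ⟨P', hP'sub, by rw [hP'card, hPoptcard], hP'dist⟩
  have hsplit : (univ.filter GoodPred).card
      + (univ.filter fun s : Fin m → ↥P => ¬ GoodPred s).card = n ^ m := by
    rw [Finset.card_filter_add_card_filter_not, Finset.card_univ, hcardfun]
  have hbadle : ((univ.filter fun s : Fin m → ↥P => ¬ GoodPred s).card : ℝ)
      ≤ 2 * η * (n:ℝ) ^ m := by
    have h1 : (univ.filter fun s : Fin m → ↥P => ¬ GoodPred s).card
        ≤ (univ.filter fun s : Fin m → ↥P => z' <
            (univ.filter fun i => ¬((s i : EuclideanSpace ℝ (Fin D)) ∈ Popt)).card).card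
          + ∑ j : Fin k, (univ.filter fun s : Fin m → ↥P =>
            (univ.filter fun i => (s i : EuclideanSpace ℝ (Fin D)) ∈ C j).card ≤ z').card :=
      le_trans (Finset.card_le_card hsubset)
        (le_trans (Finset.card_union_le _ _) (Nat.add_le_add_left Finset.card_biUnion_le _))
    have h2 : ((univ.filter fun s : Fin m → ↥P => ¬ GoodPred s).card : ℝ)
        ≤ (((univ.filter fun s : Fin m → ↥P => z' <
            (univ.filter fun i => ¬((s i : EuclideanSpace ℝ (Fin D)) ∈ Popt)).card).card : ℕ) : ℝ)
          + ∑ j : Fin k, (((univ.filter fun s : Fin m → ↥P =>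
            (univ.filter fun i => (s i : EuclideanSpace ℝ (Fin D)) ∈ C j).card ≤ z').card : ℕ) : ℝ) := by
      exact_mod_cast h1
    have h3 : ∑ j : Fin k, (((univ.filter fun s : Fin m → ↥P =>
        (univ.filter fun i => (s i : EuclideanSpace ℝ (Fin D)) ∈ C j).card ≤ z').card : ℕ) : ℝ)
        ≤ ∑ _j : Fin k, η / (2 * k) * (n:ℝ) ^ m :=
      Finset.sum_le_sum fun j _ => hBcard j
    have h4 : ∑ _j : Fin k, η / (2 * k) * (n:ℝ) ^ m = η / 2 * (n:ℝ) ^ m := by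
      rw [Finset.sum_const, Finset.card_univ, Fintype.card_fin, nsmul_eq_mul]
      field_simp
    have h6 : (0:ℝ) ≤ η * (n:ℝ)^m := by positivity
    linarith
  -- conclude
  rw [hcardfun]
  have hcast : ((n ^ m : ℕ) : ℝ) = (n:ℝ) ^ m := by push_cast; ring
  rw [hcast, le_div_iff₀ hpow]
  have hgood : ((univ.filter GoodPred).card : ℝ)
      = (n:ℝ) ^ m - ((univ.filter fun s : Fin m → ↥P => ¬ GoodPred s).card : ℝ) := by
    have h' : (((univ.filter GoodPred).card : ℕ) : ℝ)
        + (((univ.filter fun s : Fin m → ↥P => ¬ GoodPred s).card : ℕ) : ℝ)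
        = ((n ^ m : ℕ) : ℝ) := by exact_mod_cast congrArg (Nat.cast : ℕ → ℝ) hsplit
    rw [hcast] at h'
    linarith
  rw [hgood]
  linarith
end

section
/- Given an (ε₁,ε₂)-significant instance with clusters C*_1,…,C*_k, designated points o*_1,…,o*_k ∈ ℝ^D, and L > 0 such that ‖p − o*_j‖ ≤ L for every p ∈ C*_j and every j, let η, δ, ξ ∈ (0,1) and let m be a positive integer with m ≥ max{ (3k/(δ²ε₁))·log(2k/η), (k/(2ξ²ε₁(1−δ)))·log(2k/η) }. Draw an i.i.d. uniform sample s : {1,…,m} → P. Then with probability at least 1 − 2η, for every j ∈ {1,…,k}: Σ_{i : s_i ∈ C*_j} ‖s_i − o*_j‖² ≤ (1+δ)·(m/n)·( Σ_{p∈C*_j} ‖p − o*_j‖² + ξ·|C*_j|·L² ). -/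
set_option maxHeartbeats 1000000

open scoped Classical
open Finset

lemma card_filter_mul_exp_le {S : Type*} [Fintype S]
    (f : S → ℝ) (a : ℝ) (Q : Finset S) (hQ : ∀ s ∈ Q, a ≤ f s) :
    (Q.card : ℝ) * Real.exp a ≤ ∑ s, Real.exp (f s) := by
  calc (Q.card : ℝ) * Real.exp a = ∑ _s ∈ Q, Real.exp a := by
        rw [Finset.sum_const, nsmul_eq_mul]
    _ ≤ ∑ s ∈ Q, Real.exp (f s) :=
        Finset.sum_le_sum fun s hs => Real.exp_le_exp.2 (hQ s hs)
    _ ≤ ∑ s, Real.exp (f s) :=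
        Finset.sum_le_sum_of_subset_of_nonneg (Finset.subset_univ Q)
          (fun s _ _ => (Real.exp_pos _).le)

lemma exp_le_one_add_self_add_sq {x : ℝ} (h0 : 0 ≤ x) (h1 : x ≤ 1) :
    Real.exp x ≤ 1 + x + x ^ 2 := by
  have h := Real.exp_bound' h0 h1 (n := 2) two_pos
  simp [Finset.sum_range_succ, Nat.factorial] at h
  nlinarith [sq_nonneg x]

lemma exp_convex_bound {x B : ℝ} (hB : 0 < B) (h0 : 0 ≤ x) (h1 : x ≤ B) (u : ℝ) :
    Real.exp (u * x / B) ≤ 1 + x / B * (Real.exp u - 1) := by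
  have hθ0 : 0 ≤ x / B := div_nonneg h0 hB.le
  have hθ1 : x / B ≤ 1 := (div_le_one hB).2 h1
  have h := convexOn_exp.2 (Set.mem_univ (0 : ℝ)) (Set.mem_univ u)
    (by linarith : (0:ℝ) ≤ 1 - x / B) hθ0 (by ring)
  simp only [smul_eq_mul, mul_zero, zero_add, Real.exp_zero, mul_one] at h
  have hx : u * x / B = x / B * u := by ring
  rw [hx]
  linarith

/-- (Lemma 5 of the paper.) For an `(ε₁,ε₂)`-significant instance with cluster
representatives `o*_j` and diameter bound `L`, a uniform i.i.d. sample of size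
`m ≥ max{(3k/(δ²ε₁))·log(2k/η), (k/(2ξ²ε₁(1−δ)))·log(2k/η)}` satisfies, with probability at
least `1 − 2η`, `Σ_{i : s_i ∈ C*_j} ‖s_i − o*_j‖² ≤ (1+δ)(m/n)(Σ_{p∈C*_j}‖p−o*_j‖² + ξ|C*_j|L²)`
for every `j`. -/
theorem uniform_sample_cluster_cost_bound {D : ℕ} (k n z : ℕ) (hk : 0 < k)
    (hz0 : 0 < z) (hzn : z < n)
    (P Popt : Finset (EuclideanSpace ℝ (Fin D)))
    (hPcard : P.card = n) (hPopt : Popt ⊆ P) (hPoptcard : Popt.card = n - z)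
    (C : Fin k → Finset (EuclideanSpace ℝ (Fin D)))
    (hCne : ∀ j, (C j).Nonempty)
    (hCsub : ∀ j, C j ⊆ Popt)
    (hCdisj : ∀ j j', j ≠ j' → Disjoint (C j) (C j'))
    (hCcover : ∀ p ∈ Popt, ∃ j, p ∈ C j)
    (o : Fin k → EuclideanSpace ℝ (Fin D))
    (L : ℝ) (hL : 0 < L) (hCL : ∀ j, ∀ p ∈ C j, ‖p - o j‖ ≤ L)
    (ε₁ ε₂ : ℝ) (hε₁ : 0 < ε₁) (hε₂ : 0 < ε₂)
    (hsig : ∀ j, (ε₁ / k) * n ≤ ((C j).card : ℝ))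
    (hzval : (z : ℝ) = (ε₂ / k) * n)
    (η δ ξ : ℝ) (hη0 : 0 < η) (hη1 : η < 1) (hδ0 : 0 < δ) (hδ1 : δ < 1)
    (hξ0 : 0 < ξ) (hξ1 : ξ < 1)
    (m : ℕ) (hm : 0 < m)
    (hmlb : max (((3 * k : ℝ) / (δ ^ 2 * ε₁)) * Real.log (2 * k / η))
        (((k : ℝ) / (2 * ξ ^ 2 * ε₁ * (1 - δ))) * Real.log (2 * k / η)) ≤ (m : ℝ)) :
    1 - 2 * η ≤
      ((Finset.univ.filter fun s : Fin m → ↥P =>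
          ∀ j : Fin k,
            ∑ i ∈ Finset.univ.filter
                (fun i : Fin m => (s i : EuclideanSpace ℝ (Fin D)) ∈ C j),
              ‖(s i : EuclideanSpace ℝ (Fin D)) - o j‖ ^ 2 ≤
            (1 + δ) * ((m : ℝ) / n) *
              (∑ p ∈ C j, ‖p - o j‖ ^ 2 + ξ * ((C j).card : ℝ) * L ^ 2)).card : ℝ)
        / (Fintype.card (Fin m → ↥P) : ℝ) := by
  classical
  have hn0 : 0 < n := hz0.trans hzn
  have hnR : (0 : ℝ) < n := by exact_mod_cast hn0
  have hkR : (0 : ℝ) < k := by exact_mod_cast hk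
  have hL2 : (0 : ℝ) < L ^ 2 := by positivity
  have h1δ : (0 : ℝ) < 1 - δ := by linarith only [hδ1]
  set T : ℝ := Real.log (2 * k / η) with hTdef
  have hT0 : 0 < T := Real.log_pos (by
    rw [lt_div_iff₀ hη0]
    have : (1 : ℝ) ≤ k := by exact_mod_cast hk
    linarith only [hη1, this])
  -- the key arithmetic inequality : T ≤ δ*ξ*ε₁*m/k
  have hmainT : T ≤ δ * ξ * ε₁ * (m : ℝ) / k := by
    have hmX1 : ((3 * k : ℝ) / (δ ^ 2 * ε₁)) * T ≤ (m : ℝ) :=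
      le_trans (le_max_left _ _) hmlb
    have hmX2 : ((k : ℝ) / (2 * ξ ^ 2 * ε₁ * (1 - δ))) * T ≤ (m : ℝ) :=
      le_trans (le_max_right _ _) hmlb
    have hX1pos : 0 < ((3 * k : ℝ) / (δ ^ 2 * ε₁)) * T := by positivity
    have hX2pos : 0 < ((k : ℝ) / (2 * ξ ^ 2 * ε₁ * (1 - δ))) * T := by positivity
    have hprod : (((3 * k : ℝ) / (δ ^ 2 * ε₁)) * T) *
        (((k : ℝ) / (2 * ξ ^ 2 * ε₁ * (1 - δ))) * T) ≤ (m : ℝ) * (m : ℝ) :=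
      mul_le_mul hmX1 hmX2 hX2pos.le (Nat.cast_nonneg m)
    have hkey : (δ * ξ * ε₁ / k) ^ 2 *
        ((((3 * k : ℝ) / (δ ^ 2 * ε₁)) * T) *
          (((k : ℝ) / (2 * ξ ^ 2 * ε₁ * (1 - δ))) * T)) = 3 / (2 * (1 - δ)) * T ^ 2 := by
      field_simp
    have hcoef : (1 : ℝ) ≤ 3 / (2 * (1 - δ)) := by
      rw [le_div_iff₀ (by linarith only [h1δ] : (0:ℝ) < 2 * (1 - δ))]
      linarith only [hδ0]
    have hsq : T ^ 2 ≤ (δ * ξ * ε₁ * (m : ℝ) / k) ^ 2 := by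
      calc T ^ 2 = 1 * T ^ 2 := (one_mul _).symm
        _ ≤ 3 / (2 * (1 - δ)) * T ^ 2 :=
            mul_le_mul_of_nonneg_right hcoef (sq_nonneg T)
        _ = (δ * ξ * ε₁ / k) ^ 2 * ((((3 * k : ℝ) / (δ ^ 2 * ε₁)) * T) *
            (((k : ℝ) / (2 * ξ ^ 2 * ε₁ * (1 - δ))) * T)) := hkey.symm
        _ ≤ (δ * ξ * ε₁ / k) ^ 2 * ((m : ℝ) * (m : ℝ)) :=
            mul_le_mul_of_nonneg_left hprod (by positivity)
        _ = (δ * ξ * ε₁ * (m : ℝ) / k) ^ 2 := by ring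
    exact le_of_pow_le_pow_left₀ two_ne_zero (by positivity) hsq
  -- cardinality of the sample space
  have hcardP : Fintype.card ↥P = n := by rw [Fintype.card_coe, hPcard]
  have hN : (Fintype.card (Fin m → ↥P) : ℝ) = (n : ℝ) ^ m := by
    rw [Fintype.card_fun, hcardP, Fintype.card_fin]
    push_cast
    ring
  have hNpos : (0 : ℝ) < (Fintype.card (Fin m → ↥P) : ℝ) := by
    rw [hN]; positivity
  -- per-cluster bad sets
  set cond : Fin k → (Fin m → ↥P) → Prop := fun j s =>
    ∑ i ∈ Finset.univ.filter
        (fun i : Fin m => (s i : EuclideanSpace ℝ (Fin D)) ∈ C j),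
      ‖(s i : EuclideanSpace ℝ (Fin D)) - o j‖ ^ 2 ≤
    (1 + δ) * ((m : ℝ) / n) *
      (∑ p ∈ C j, ‖p - o j‖ ^ 2 + ξ * ((C j).card : ℝ) * L ^ 2) with hconddef
  have key : ∀ j : Fin k,
      (((Finset.univ.filter fun s : Fin m → ↥P => ¬ cond j s).card : ℝ)) ≤
        η / (2 * k) * (n : ℝ) ^ m := by
    intro j
    set A : ℝ := ∑ p ∈ C j, ‖p - o j‖ ^ 2 with hAdef
    have hA0 : 0 ≤ A := Finset.sum_nonneg fun p _ => by positivity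
    set c : ℝ := ((C j).card : ℝ) with hcdef
    have hc0 : 0 < c := by
      have h := (hCne j).card_pos
      rw [hcdef]
      exact_mod_cast h
    set a : ℝ := (1 + δ) * ((m : ℝ) / n) * (A + ξ * c * L ^ 2) with hadef
    set Y : ↥P → ℝ := fun p =>
      if (p : EuclideanSpace ℝ (Fin D)) ∈ C j
      then ‖(p : EuclideanSpace ℝ (Fin D)) - o j‖ ^ 2 else 0 with hYdef
    have hY0 : ∀ p, 0 ≤ Y p := by
      intro p; simp only [hYdef]
      split <;> positivity
    have hYL : ∀ p, Y p ≤ L ^ 2 := by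
      intro p; simp only [hYdef]
      split
      · rename_i h
        have h1 := hCL j _ h
        have h2 := norm_nonneg ((p : EuclideanSpace ℝ (Fin D)) - o j)
        exact pow_le_pow_left₀ h2 h1 2
      · positivity
    have hfilter : P.filter (fun q => q ∈ C j) = C j := by
      apply Finset.ext
      intro p
      simp only [Finset.mem_filter]
      constructor
      · rintro ⟨_, h⟩; exact h
      · intro h; exact ⟨hPopt (hCsub j h), h⟩
    have hsumY : ∑ p : ↥P, Y p = A := by
      rw [hAdef, hYdef]
      rw [Finset.sum_coe_sort P (fun q => if q ∈ C j then ‖q - o j‖ ^ 2 else 0)]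
      rw [← Finset.sum_filter, hfilter]
    have hXeq : ∀ s : Fin m → ↥P,
        (∑ i ∈ Finset.univ.filter
            (fun i : Fin m => (s i : EuclideanSpace ℝ (Fin D)) ∈ C j),
          ‖(s i : EuclideanSpace ℝ (Fin D)) - o j‖ ^ 2) = ∑ i : Fin m, Y (s i) := by
      intro s
      rw [Finset.sum_filter]
    set t : ℝ := δ / L ^ 2 with htdef
    have ht0 : 0 < t := by positivity
    -- Chernoff step
    have step1 : (((Finset.univ.filter fun s : Fin m → ↥P => ¬ cond j s).card : ℝ)) *
        Real.exp (t * a) ≤ ∑ s : Fin m → ↥P, Real.exp (t * ∑ i : Fin m, Y (s i)) := by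
      apply card_filter_mul_exp_le
      intro s hs
      rw [Finset.mem_filter] at hs
      have hlt : a < ∑ i : Fin m, Y (s i) := by
        rw [← hXeq s]
        exact lt_of_not_ge hs.2
      exact mul_le_mul_of_nonneg_left hlt.le ht0.le
    -- factorization
    have step2 : ∑ s : Fin m → ↥P, Real.exp (t * ∑ i : Fin m, Y (s i)) =
        (∑ p : ↥P, Real.exp (t * Y p)) ^ m := by
      rw [Fintype.sum_pow (fun p : ↥P => Real.exp (t * Y p)) m]
      refine Finset.sum_congr rfl fun s _ => ?_
      rw [Finset.mul_sum, Real.exp_sum]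
    -- mgf bound
    set x : ℝ := A / (n * L ^ 2) * (Real.exp δ - 1) with hxdef
    have hx0 : 0 ≤ x := by
      have : (0:ℝ) ≤ Real.exp δ - 1 := by
        have h := Real.add_one_le_exp δ; linarith only [h, hδ0]
      positivity
    have step3 : ∑ p : ↥P, Real.exp (t * Y p) ≤ (n : ℝ) * Real.exp x := by
      have hpt : ∀ p : ↥P, Real.exp (t * Y p) ≤ 1 + Y p / L ^ 2 * (Real.exp δ - 1) := by
        intro p
        have h := exp_convex_bound hL2 (hY0 p) (hYL p) δ
        have : t * Y p = δ * Y p / L ^ 2 := by rw [htdef]; ring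
        rw [this]
        exact h
      calc ∑ p : ↥P, Real.exp (t * Y p)
          ≤ ∑ p : ↥P, (1 + Y p / L ^ 2 * (Real.exp δ - 1)) :=
            Finset.sum_le_sum fun p _ => hpt p
        _ = (n : ℝ) + A / L ^ 2 * (Real.exp δ - 1) := by
            rw [Finset.sum_add_distrib, Finset.sum_const, ← Finset.sum_mul,
              ← Finset.sum_div, hsumY]
            simp [Fintype.card_coe, hPcard]
        _ = (n : ℝ) * (1 + x) := by
            rw [hxdef]
            field_simp
        _ ≤ (n : ℝ) * Real.exp x := by
            have h := Real.add_one_le_exp x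
            have h2 : 1 + x ≤ Real.exp x := by linarith only [h]
            exact mul_le_mul_of_nonneg_left h2 hnR.le
    -- combine
    have step4 : (((Finset.univ.filter fun s : Fin m → ↥P => ¬ cond j s).card : ℝ)) ≤
        (n : ℝ) ^ m * Real.exp ((m : ℝ) * x - t * a) := by
      have hsum_nonneg : (0:ℝ) ≤ ∑ p : ↥P, Real.exp (t * Y p) :=
        Finset.sum_nonneg fun p _ => (Real.exp_pos _).le
      have hpow : (∑ p : ↥P, Real.exp (t * Y p)) ^ m ≤ ((n : ℝ) * Real.exp x) ^ m :=
        pow_le_pow_left₀ hsum_nonneg step3 m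
      have hrhs : ((n : ℝ) * Real.exp x) ^ m = (n : ℝ) ^ m * Real.exp ((m : ℝ) * x) := by
        rw [mul_pow, ← Real.exp_nat_mul]
      have h1 : (((Finset.univ.filter fun s : Fin m → ↥P => ¬ cond j s).card : ℝ)) *
          Real.exp (t * a) ≤ (n : ℝ) ^ m * Real.exp ((m : ℝ) * x) := by
        calc _ ≤ ∑ s : Fin m → ↥P, Real.exp (t * ∑ i : Fin m, Y (s i)) := step1
          _ = (∑ p : ↥P, Real.exp (t * Y p)) ^ m := step2
          _ ≤ ((n : ℝ) * Real.exp x) ^ m := hpow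
          _ = (n : ℝ) ^ m * Real.exp ((m : ℝ) * x) := hrhs
      have h2 : (n : ℝ) ^ m * Real.exp ((m : ℝ) * x) =
          ((n : ℝ) ^ m * Real.exp ((m : ℝ) * x - t * a)) * Real.exp (t * a) := by
        rw [mul_assoc, ← Real.exp_add]
        ring_nf
      rw [h2] at h1
      exact le_of_mul_le_mul_right h1 (Real.exp_pos _)
    -- exponent bound
    have hexpbd : (m : ℝ) * x - t * a ≤ -T := by
      set lam : ℝ := (m : ℝ) * A / (n * L ^ 2) with hlamdef
      have hlam0 : 0 ≤ lam := by positivity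
      set gam : ℝ := (m : ℝ) * ξ * c / n with hgamdef
      have hmx : (m : ℝ) * x = lam * (Real.exp δ - 1) := by
        rw [hxdef, hlamdef]; ring
      have hta : t * a = δ * (1 + δ) * lam + δ * (1 + δ) * gam := by
        rw [htdef, hadef, hlamdef, hgamdef]
        field_simp
      have hδbd : Real.exp δ - 1 ≤ δ + δ ^ 2 := by
        have := exp_le_one_add_self_add_sq hδ0.le hδ1.le
        linarith only [this]
      have hgam0 : 0 ≤ gam := by
        rw [hgamdef]; positivity
      have h1 : (m : ℝ) * x - t * a ≤ -(δ * gam) := by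
        rw [hmx, hta]
        have hub : lam * (Real.exp δ - 1) ≤ lam * (δ + δ ^ 2) :=
          mul_le_mul_of_nonneg_left hδbd hlam0
        have he : lam * (δ + δ ^ 2) = δ * (1 + δ) * lam := by ring
        have hg : δ * gam ≤ δ * (1 + δ) * gam := by
          have h2 : 0 ≤ δ * δ * gam := by positivity
          have he2 : δ * (1 + δ) * gam = δ * gam + δ * δ * gam := by ring
          linarith only [h2, he2]
        linarith only [hub, he, hg]
      have h2 : T ≤ δ * gam := by
        have hcn : ε₁ / k ≤ c / n := by
          rw [div_le_div_iff₀ hkR hnR]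
          have h := mul_le_mul_of_nonneg_right (hsig j) hkR.le
          have he : ε₁ / k * n * k = ε₁ * n := by field_simp
          rw [hcdef]
          linarith only [h, he]
        have : δ * ξ * ε₁ * (m : ℝ) / k ≤ δ * gam := by
          rw [hgamdef]
          have hm0 : (0:ℝ) ≤ (m:ℝ) := Nat.cast_nonneg m
          calc δ * ξ * ε₁ * (m : ℝ) / k = (δ * ξ * (m:ℝ)) * (ε₁ / k) := by ring
            _ ≤ (δ * ξ * (m:ℝ)) * (c / n) := by
                apply mul_le_mul_of_nonneg_left hcn
                positivity
            _ = δ * ((m : ℝ) * ξ * c / n) := by ring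
        linarith only [hmainT, this]
      linarith only [h1, h2]
    -- conclude per-cluster bound
    have hexpT : Real.exp (-T) = η / (2 * k) := by
      rw [Real.exp_neg, hTdef, Real.exp_log (by positivity)]
      rw [inv_div]
    calc (((Finset.univ.filter fun s : Fin m → ↥P => ¬ cond j s).card : ℝ))
        ≤ (n : ℝ) ^ m * Real.exp ((m : ℝ) * x - t * a) := step4
      _ ≤ (n : ℝ) ^ m * Real.exp (-T) := by
          apply mul_le_mul_of_nonneg_left (Real.exp_le_exp.2 hexpbd)
          positivity
      _ = η / (2 * k) * (n : ℝ) ^ m := by rw [hexpT]; ring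
  -- glue
  set Good : Finset (Fin m → ↥P) :=
    Finset.univ.filter (fun s : Fin m → ↥P => ∀ j : Fin k, cond j s) with hGood
  have hBadsub : (Finset.univ.filter fun s : Fin m → ↥P => ¬ ∀ j : Fin k, cond j s) ⊆
      Finset.univ.biUnion (fun j : Fin k =>
        Finset.univ.filter fun s : Fin m → ↥P => ¬ cond j s) := by
    intro s hs
    rw [Finset.mem_filter] at hs
    push_neg at hs
    obtain ⟨j, hj⟩ := hs.2
    rw [Finset.mem_biUnion]
    exact ⟨j, Finset.mem_univ j, Finset.mem_filter.2 ⟨Finset.mem_univ s, hj⟩⟩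
  have hBadcard : (((Finset.univ.filter fun s : Fin m → ↥P =>
      ¬ ∀ j : Fin k, cond j s).card : ℝ)) ≤ η / 2 * (n : ℝ) ^ m := by
    calc (((Finset.univ.filter fun s : Fin m → ↥P => ¬ ∀ j : Fin k, cond j s).card : ℝ))
        ≤ ((Finset.univ.biUnion (fun j : Fin k =>
            Finset.univ.filter fun s : Fin m → ↥P => ¬ cond j s)).card : ℝ) := by
          exact_mod_cast Finset.card_le_card hBadsub
      _ ≤ ∑ j : Fin k, (((Finset.univ.filter fun s : Fin m → ↥P =>
            ¬ cond j s).card : ℝ)) := by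
          exact_mod_cast Finset.card_biUnion_le
      _ ≤ ∑ _j : Fin k, η / (2 * k) * (n : ℝ) ^ m :=
          Finset.sum_le_sum fun j _ => key j
      _ = η / 2 * (n : ℝ) ^ m := by
          rw [Finset.sum_const, Finset.card_univ, Fintype.card_fin, nsmul_eq_mul]
          field_simp
  have hsplit : Good.card + (Finset.univ.filter fun s : Fin m → ↥P =>
      ¬ ∀ j : Fin k, cond j s).card = Fintype.card (Fin m → ↥P) := by
    rw [hGood]
    rw [Finset.card_filter_add_card_filter_not]
    exact Finset.card_univ
  have hGoodcard : (Fintype.card (Fin m → ↥P) : ℝ) -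
      ((Finset.univ.filter fun s : Fin m → ↥P =>
        ¬ ∀ j : Fin k, cond j s).card : ℝ) = (Good.card : ℝ) := by
    have := hsplit
    push_cast [← this]
    ring
  show 1 - 2 * η ≤ (Good.card : ℝ) / (Fintype.card (Fin m → ↥P) : ℝ)
  rw [le_div_iff₀ hNpos, ← hGoodcard, hN]
  have hpw : (0:ℝ) ≤ (n : ℝ) ^ m := by positivity
  have h3 : 0 ≤ 3 / 2 * η * (n : ℝ) ^ m := by positivity
  linarith only [hBadcard, h3]
end

section
/- Let P ⊆ ℝ^D be finite, let P_opt ⊆ P be partitioned into nonempty clusters C*_1,…,C*_k, let o*_1,…,o*_k ∈ ℝ^D, and let O* = {o*_1,…,o*_k}. Let S ⊆ P be finite, let k' be a natural number with k' < |S| and |S \ P_opt| ≤ k', let c ≥ 1, and let H ⊆ ℝ^D be a nonempty finite set with Cost(S, H) ≤ c · min{ Cost(S, K) : K ⊆ ℝ^D, |K| = k + k' } (i.e., H is a c-approximate solution of (k+k')-means clustering on S). Then, writing S_opt = S ∩ P_opt: Σ_{j=1}^k |S ∩ C*_j| · dist(o*_j, H)² ≤ (2 + 2c) · Σ_{j=1}^k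 Σ_{q∈S∩C*_j} ‖q − o*_j‖². -/
open scoped Classical
open Finset

/-- `Cost(X, H) = Σ_{q∈X} dist(q, H)²`, where `dist(q,H)` is the distance from `q` to the
nearest point of `H`. -/
noncomputable def costSq {D : ℕ} (X H : Finset (EuclideanSpace ℝ (Fin D))) : ℝ :=
  ∑ q ∈ X, Metric.infDist q (H : Set (EuclideanSpace ℝ (Fin D))) ^ 2

/-- (Lemma 7 of the paper.) If `|S \ P_opt| ≤ k' < |S|` and `H` is a
`c`-approximate `(k+k')`-means solution on `S`, then the cost of the star-shaped
transformation of `S_opt` with respect to `H`, namely `Σ_j |S∩C*_j|·dist(o*_j,H)²`, is at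
most `(2+2c)·Σ_j Σ_{q∈S∩C*_j} ‖q − o*_j‖²`. -/
theorem star_transformed_sample_cost_bound {D : ℕ} (k : ℕ) (hk : 0 < k)
    (P Popt : Finset (EuclideanSpace ℝ (Fin D))) (hPopt : Popt ⊆ P)
    (C : Fin k → Finset (EuclideanSpace ℝ (Fin D)))
    (hCne : ∀ j, (C j).Nonempty)
    (hCsub : ∀ j, C j ⊆ Popt)
    (hCdisj : ∀ j j', j ≠ j' → Disjoint (C j) (C j'))
    (hCcover : ∀ p ∈ Popt, ∃ j, p ∈ C j)
    (o : Fin k → EuclideanSpace ℝ (Fin D))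
    (S : Finset (EuclideanSpace ℝ (Fin D))) (hS : S ⊆ P)
    (k' : ℕ) (hk'S : k' < S.card) (houtl : (S \ Popt).card ≤ k')
    (c : ℝ) (hc : 1 ≤ c)
    (H : Finset (EuclideanSpace ℝ (Fin D))) (hH : H.Nonempty)
    (happrox : ∀ K : Finset (EuclideanSpace ℝ (Fin D)), K.Nonempty → K.card = k + k' →
      costSq S H ≤ c * costSq S K) :
    ∑ j : Fin k, ((S ∩ C j).card : ℝ) *
        Metric.infDist (o j) (H : Set (EuclideanSpace ℝ (Fin D))) ^ 2 ≤
      (2 + 2 * c) * ∑ j : Fin k, ∑ q ∈ S ∩ C j, ‖q - o j‖ ^ 2 := by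
  have hA : (0:ℝ) ≤ ∑ j : Fin k, ∑ q ∈ S ∩ C j, ‖q - o j‖ ^ 2 := by positivity
  by_cases hD : D = 0
  · subst hD
    haveI : Subsingleton (EuclideanSpace ℝ (Fin 0)) :=
      ⟨fun a b => PiLp.ext fun (i : Fin 0) => i.elim0⟩
    obtain ⟨h0, hh0⟩ := hH
    have hz : ∀ j, Metric.infDist (o j) (H : Set (EuclideanSpace ℝ (Fin 0))) = 0 := by
      intro j
      have he : o j = h0 := Subsingleton.elim _ _
      rw [he]
      exact Metric.infDist_zero_of_mem (by exact_mod_cast hh0)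
    have : ∑ j : Fin k, ((S ∩ C j).card : ℝ) *
        Metric.infDist (o j) (H : Set (EuclideanSpace ℝ (Fin 0))) ^ 2 = 0 := by
      simp [hz]
    rw [this]
    nlinarith
  · have hDpos : 0 < D := Nat.pos_of_ne_zero hD
    haveI : Infinite (EuclideanSpace ℝ (Fin D)) := by
      refine Infinite.of_injective
        (fun r : ℝ => r • EuclideanSpace.single (⟨0, hDpos⟩ : Fin D) (1:ℝ)) ?_
      apply smul_left_injective ℝ
      intro h
      have h2 : EuclideanSpace.single (⟨0, hDpos⟩ : Fin D) (1:ℝ) (⟨0, hDpos⟩ : Fin D)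
          = 0 := by rw [h]; rfl
      simp [EuclideanSpace.single_apply] at h2
    -- base set
    set B := (Finset.univ.image o) ∪ (S \ Popt) with hBdef
    have hBcard : B.card ≤ k + k' := by
      have h1 : (Finset.univ.image o).card ≤ k := by
        simpa using Finset.card_image_le (s := (Finset.univ : Finset (Fin k))) (f := o)
      calc B.card ≤ (Finset.univ.image o).card + (S \ Popt).card :=
            Finset.card_union_le _ _
        _ ≤ k + k' := by omega
    obtain ⟨K, hBK, hKcard⟩ := Infinite.exists_superset_card_eq B (k + k') hBcard
    have hKne : K.Nonempty := Finset.card_pos.mp (by omega)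
    have hoK : ∀ j, o j ∈ K := fun j =>
      hBK (Finset.mem_union_left _ (Finset.mem_image_of_mem o (Finset.mem_univ j)))
    have hPD : (↑(Finset.univ : Finset (Fin k)) : Set (Fin k)).PairwiseDisjoint
        (fun j => S ∩ C j) := by
      intro a _ b _ hab
      exact Disjoint.mono Finset.inter_subset_right Finset.inter_subset_right
        (hCdisj a b hab)
    have hTsub : Finset.univ.biUnion (fun j => S ∩ C j) ⊆ S := by
      intro q hq
      simp only [Finset.mem_biUnion, Finset.mem_inter, Finset.mem_univ, true_and] at hq
      obtain ⟨j, hj, _⟩ := hq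
      exact hj
    -- Step: costSq S K ≤ A
    have hKA : costSq S K ≤ ∑ j : Fin k, ∑ q ∈ S ∩ C j, ‖q - o j‖ ^ 2 := by
      have hsplit : S = (S \ Popt) ∪ Finset.univ.biUnion (fun j => S ∩ C j) := by
        ext q
        simp only [Finset.mem_union, Finset.mem_sdiff, Finset.mem_biUnion,
          Finset.mem_inter, Finset.mem_univ, true_and]
        constructor
        · intro hq
          by_cases hqP : q ∈ Popt
          · obtain ⟨j, hj⟩ := hCcover q hqP
            exact Or.inr ⟨j, hq, hj⟩
          · exact Or.inl ⟨hq, hqP⟩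
        · rintro (⟨hq, _⟩ | ⟨j, hq, _⟩) <;> exact hq
      have hdis : Disjoint (S \ Popt) (Finset.univ.biUnion (fun j => S ∩ C j)) := by
        rw [Finset.disjoint_left]
        intro q hq hq2
        simp only [Finset.mem_biUnion, Finset.mem_inter, Finset.mem_univ, true_and] at hq2
        obtain ⟨j, _, hj⟩ := hq2
        exact (Finset.mem_sdiff.mp hq).2 (hCsub j hj)
      rw [costSq]
      conv_lhs => rw [hsplit]
      rw [Finset.sum_union hdis, Finset.sum_biUnion hPD]
      have hz : ∑ q ∈ S \ Popt, Metric.infDist q (K : Set (EuclideanSpace ℝ (Fin D))) ^ 2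
          = 0 := by
        apply Finset.sum_eq_zero
        intro q hq
        have : q ∈ K := hBK (Finset.mem_union_right _ hq)
        rw [Metric.infDist_zero_of_mem (by exact_mod_cast this)]
        ring
      rw [hz, zero_add]
      apply Finset.sum_le_sum
      intro j _
      apply Finset.sum_le_sum
      intro q hq
      have hd : Metric.infDist q (K : Set (EuclideanSpace ℝ (Fin D))) ≤ ‖q - o j‖ := by
        have := Metric.infDist_le_dist_of_mem (x := q)
          (show o j ∈ (K : Set (EuclideanSpace ℝ (Fin D))) by exact_mod_cast hoK j)
        rwa [dist_eq_norm] at this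
      have hnn : 0 ≤ Metric.infDist q (K : Set (EuclideanSpace ℝ (Fin D))) :=
        Metric.infDist_nonneg
      nlinarith
    -- Step: Σ_j Σ dist(q,H)^2 ≤ costSq S H
    have hSH : ∑ j : Fin k, ∑ q ∈ S ∩ C j,
        Metric.infDist q (H : Set (EuclideanSpace ℝ (Fin D))) ^ 2 ≤ costSq S H := by
      rw [costSq, ← Finset.sum_biUnion hPD]
      apply Finset.sum_le_sum_of_subset_of_nonneg hTsub
      intro q _ _
      positivity
    -- Step: pointwise bound and summation
    have hmain : ∑ j : Fin k, ((S ∩ C j).card : ℝ) *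
        Metric.infDist (o j) (H : Set (EuclideanSpace ℝ (Fin D))) ^ 2 ≤
        ∑ j : Fin k, ∑ q ∈ S ∩ C j, (2 * ‖q - o j‖ ^ 2 +
          2 * Metric.infDist q (H : Set (EuclideanSpace ℝ (Fin D))) ^ 2) := by
      apply Finset.sum_le_sum
      intro j _
      have : ((S ∩ C j).card : ℝ) *
          Metric.infDist (o j) (H : Set (EuclideanSpace ℝ (Fin D))) ^ 2 =
          ∑ _q ∈ S ∩ C j, Metric.infDist (o j) (H : Set (EuclideanSpace ℝ (Fin D))) ^ 2 := by
        rw [Finset.sum_const, nsmul_eq_mul]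
      rw [this]
      apply Finset.sum_le_sum
      intro q hq
      have h1 : Metric.infDist (o j) (H : Set (EuclideanSpace ℝ (Fin D))) ≤
          Metric.infDist q (H : Set (EuclideanSpace ℝ (Fin D))) + dist (o j) q :=
        Metric.infDist_le_infDist_add_dist
      have h2 : dist (o j) q = ‖q - o j‖ := by rw [dist_eq_norm, norm_sub_rev]
      have h3 : 0 ≤ Metric.infDist (o j) (H : Set (EuclideanSpace ℝ (Fin D))) :=
        Metric.infDist_nonneg
      have h4 : 0 ≤ Metric.infDist q (H : Set (EuclideanSpace ℝ (Fin D))) :=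
        Metric.infDist_nonneg
      have h5 : Metric.infDist (o j) (H : Set (EuclideanSpace ℝ (Fin D))) ^ 2 ≤
          (Metric.infDist q (H : Set (EuclideanSpace ℝ (Fin D))) + dist (o j) q) ^ 2 :=
        pow_le_pow_left₀ h3 h1 2
      rw [← h2]
      nlinarith [sq_nonneg (Metric.infDist q (H : Set (EuclideanSpace ℝ (Fin D))) - dist (o j) q)]
    have hexp : ∑ j : Fin k, ∑ q ∈ S ∩ C j, (2 * ‖q - o j‖ ^ 2 +
          2 * Metric.infDist q (H : Set (EuclideanSpace ℝ (Fin D))) ^ 2) =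
        2 * (∑ j : Fin k, ∑ q ∈ S ∩ C j, ‖q - o j‖ ^ 2) +
        2 * (∑ j : Fin k, ∑ q ∈ S ∩ C j,
          Metric.infDist q (H : Set (EuclideanSpace ℝ (Fin D))) ^ 2) := by
      simp [Finset.sum_add_distrib, Finset.mul_sum]
    have happ := happrox K hKne hKcard
    have hcK : c * costSq S K ≤ c * (∑ j : Fin k, ∑ q ∈ S ∩ C j, ‖q - o j‖ ^ 2) :=
      mul_le_mul_of_nonneg_left hKA (by linarith)
    linarith
end

section
/- Let P ⊆ ℝ^D be finite with |P| = n, let P_opt ⊆ P be partitioned into nonempty clusters C*_1,…,C*_k with |C*_j| ≥ (ε₁/k)·n for every j (ε₁ > 0), and let η, δ ∈ (0,1) and ε₂ > 0 with t := η(1−δ)·(ε₁/ε₂) > 1. Let S ⊆ P be a nonempty finite subset with |S ∩ C*_j| ≥ (1−δ)·(|C*_j|/n)·|S| for every j, and let S_in ⊆ S satisfy |S \ S_in| ≤ (ε₂/(k·η))·|S|. Then for every j ∈ {1,…,k}: |S_in ∩ C*_j| ≥ (1 − 1/t)·(1−δ)·(|C*_j|/n)·|S|; equivalently, |C*_j|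 ≤ (n/|S|)·( t/((t−1)(1−δ)) )·|S_in ∩ C*_j|. -/
open scoped Classical
open Finset

/-- (Lemma 9 of the paper.) If `|C*_j| ≥ (ε₁/k)·n`,
`t = η(1−δ)·(ε₁/ε₂) > 1`, `|S ∩ C*_j| ≥ (1−δ)(|C*_j|/n)|S|`, and `S_in ⊆ S` discards at most
`(ε₂/(kη))|S|` points, then `|S_in ∩ C*_j| ≥ (1 − 1/t)(1−δ)(|C*_j|/n)|S|`; equivalently,
`|C*_j| ≤ (n/|S|)·(t/((t−1)(1−δ)))·|S_in ∩ C*_j|`. -/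
theorem inlier_sample_cluster_count_bound {D : ℕ} (k n : ℕ) (hk : 0 < k)
    (P Popt : Finset (EuclideanSpace ℝ (Fin D)))
    (hPcard : P.card = n) (hPopt : Popt ⊆ P)
    (C : Fin k → Finset (EuclideanSpace ℝ (Fin D)))
    (hCne : ∀ j, (C j).Nonempty)
    (hCsub : ∀ j, C j ⊆ Popt)
    (hCdisj : ∀ j j', j ≠ j' → Disjoint (C j) (C j'))
    (hCcover : ∀ p ∈ Popt, ∃ j, p ∈ C j)
    (ε₁ ε₂ : ℝ) (hε₁ : 0 < ε₁) (hε₂ : 0 < ε₂)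
    (hsig : ∀ j, (ε₁ / k) * n ≤ ((C j).card : ℝ))
    (η δ : ℝ) (hη0 : 0 < η) (hη1 : η < 1) (hδ0 : 0 < δ) (hδ1 : δ < 1)
    (t : ℝ) (ht : t = η * (1 - δ) * (ε₁ / ε₂)) (ht1 : 1 < t)
    (S : Finset (EuclideanSpace ℝ (Fin D))) (hS : S ⊆ P) (hSne : S.Nonempty)
    (hSC : ∀ j, (1 - δ) * (((C j).card : ℝ) / n) * S.card ≤ ((S ∩ C j).card : ℝ))
    (Sin : Finset (EuclideanSpace ℝ (Fin D))) (hSin : Sin ⊆ S)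
    (hdiscard : ((S \ Sin).card : ℝ) ≤ (ε₂ / (k * η)) * S.card) :
    ∀ j : Fin k,
      (1 - 1 / t) * (1 - δ) * (((C j).card : ℝ) / n) * S.card ≤
          ((Sin ∩ C j).card : ℝ) ∧
        ((C j).card : ℝ) ≤
          ((n : ℝ) / S.card) * (t / ((t - 1) * (1 - δ))) * ((Sin ∩ C j).card : ℝ) := by
  intro j
  have hs0 : 0 < S.card := Finset.card_pos.mpr hSne
  have hs : 0 < (S.card : ℝ) := by exact_mod_cast hs0
  have hn : 0 < (n : ℝ) := by
    have h := Finset.card_le_card hS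
    rw [hPcard] at h
    exact_mod_cast lt_of_lt_of_le hs0 h
  have hk' : 0 < (k : ℝ) := by exact_mod_cast hk
  have hδ' : 0 < 1 - δ := by linarith
  have ht0 : 0 < t := lt_trans one_pos ht1
  have hsub : S ∩ C j ⊆ (Sin ∩ C j) ∪ (S \ Sin) := by
    intro x hx
    simp only [Finset.mem_inter, Finset.mem_union, Finset.mem_sdiff] at *
    by_cases hxi : x ∈ Sin
    · exact Or.inl ⟨hxi, hx.2⟩
    · exact Or.inr ⟨hx.1, hxi⟩
  have hsplit : (S ∩ C j).card ≤ (Sin ∩ C j).card + (S \ Sin).card :=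
    le_trans (Finset.card_le_card hsub) (Finset.card_union_le _ _)
  have h3 : ((S ∩ C j).card : ℝ) ≤ ((Sin ∩ C j).card : ℝ) + ((S \ Sin).card : ℝ) := by
    exact_mod_cast hsplit
  have hc := hsig j
  have h1 := hSC j
  have hkey : t * ε₂ = η * (1 - δ) * ε₁ := by
    rw [ht]; field_simp
  -- d ≤ (1/t)*(1-δ)*(c/n)*s
  have hd2 : ((S \ Sin).card : ℝ) ≤ (1 / t) * (1 - δ) * (((C j).card : ℝ) / n) * S.card := by
    have heq : ε₂ / (k * η) = (1 / t) * (1 - δ) * (ε₁ / k) := by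
      field_simp
      nlinarith [hkey]
    have hmono : (1 / t) * (1 - δ) * (ε₁ / k) * S.card ≤
        (1 / t) * (1 - δ) * (((C j).card : ℝ) / n) * S.card := by
      have h4 : ε₁ / k ≤ ((C j).card : ℝ) / n := by
        rw [div_le_div_iff₀ hk' hn]
        have h5 := mul_le_mul_of_nonneg_right hc hk'.le
        calc ε₁ * n = (ε₁ / k * n) * k := by field_simp
          _ ≤ _ := h5
      have hpos : (0:ℝ) ≤ (1 / t) * (1 - δ) := by positivity
      exact mul_le_mul_of_nonneg_right (mul_le_mul_of_nonneg_left h4 hpos) hs.le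
    calc ((S \ Sin).card : ℝ) ≤ (ε₂ / (k * η)) * S.card := hdiscard
      _ = (1 / t) * (1 - δ) * (ε₁ / k) * S.card := by rw [heq]
      _ ≤ _ := hmono
  have hgoal1 : (1 - 1 / t) * (1 - δ) * (((C j).card : ℝ) / n) * S.card ≤
      ((Sin ∩ C j).card : ℝ) := by
    have hexp : (1 - 1 / t) * (1 - δ) * (((C j).card : ℝ) / n) * S.card =
        (1 - δ) * (((C j).card : ℝ) / n) * S.card -
          (1 / t) * (1 - δ) * (((C j).card : ℝ) / n) * S.card := by ring
    rw [hexp]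
    linarith [h1, h3, hd2]
  refine ⟨hgoal1, ?_⟩
  have htm : 0 < t - 1 := by linarith
  have hkey2 : ((C j).card : ℝ) * S.card * ((t - 1) * (1 - δ)) ≤
      ((Sin ∩ C j).card : ℝ) * ((n : ℝ) * t) := by
    have h6 := mul_le_mul_of_nonneg_right hgoal1 (by positivity : (0:ℝ) ≤ (n : ℝ) * t)
    have h5 : (1 - 1 / t) * (1 - δ) * (((C j).card : ℝ) / n) * S.card * ((n : ℝ) * t) =
        ((C j).card : ℝ) * S.card * ((t - 1) * (1 - δ)) := by
      field_simp
    linarith [h5 ▸ h6]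
  have hden : 0 < S.card * ((t - 1) * (1 - δ)) := by positivity
  have hre : ((n : ℝ) / S.card) * (t / ((t - 1) * (1 - δ))) * ((Sin ∩ C j).card : ℝ) =
      ((Sin ∩ C j).card : ℝ) * ((n : ℝ) * t) / (S.card * ((t - 1) * (1 - δ))) := by
    field_simp
  rw [hre, le_div_iff₀ hden]
  linarith [hkey2]
end
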